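/- arXiv:1402.2596 — 6 statements merged into one kernel-verified Lean document; each statement's English description precedes it below -/
import Mathlib

section
/- Let P be a probability measure on a Polish space Ω, ΔS : Ω → ℝ^d Borel with E_P|ΔS| < ∞, and H ⊆ ℝ^d a set of admissible strategies whose generated cone C = {cH : H ∈ proj_{N⊥(P)}(H), c ≥ 0} (projections onto the span N⊥(P) of the support of ΔS) is closed and convex. Assume NA(P): for all H ∈ H, H·ΔS ≥ 0 P-a.s. implies H·ΔS = 0 P-a.s. Then there exists a probability measure Q equivalent to P with bounded density dQ/dP such that E_Q|ΔS| < ∞ and E_Q[H·ΔS] ≤ 0 for every H ∈ H. -/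
open MeasureTheory Filter Set
open scoped RealInnerProductSpace ENNReal

noncomputable section

namespace FTAPaux

/-- `g t = 1/(1+e^t)`, a decreasing function with values in `(0,1)`. -/
def gfun (t : ℝ) : ℝ := (1 + Real.exp t)⁻¹

/-- `φ t = log (1 + e^{-t})`. -/
def phi (t : ℝ) : ℝ := Real.log (1 + Real.exp (-t))

lemma one_add_exp_pos (t : ℝ) : 0 < 1 + Real.exp t := by positivity

lemma gfun_pos (t : ℝ) : 0 < gfun t := by
  unfold gfun; positivity

lemma gfun_le_one (t : ℝ) : gfun t ≤ 1 := by
  rw [gfun, inv_le_one₀ (one_add_exp_pos t)]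
  nlinarith [Real.exp_pos t]

lemma gfun_antitone : Antitone gfun := by
  intro a b hab
  exact inv_anti₀ (one_add_exp_pos a)
    (by nlinarith [Real.exp_le_exp.2 hab])

lemma continuous_gfun : Continuous gfun :=
  (continuous_const.add Real.continuous_exp).inv₀ (fun t => (one_add_exp_pos t).ne')

lemma phi_nonneg (t : ℝ) : 0 ≤ phi t := by
  rw [phi]
  apply Real.log_nonneg
  nlinarith [Real.exp_pos (-t)]

lemma continuous_phi : Continuous phi :=
  ((continuous_const.add (Real.continuous_exp.comp continuous_neg))).log
    (fun t => (one_add_exp_pos (-t)).ne')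

lemma neg_le_phi (t : ℝ) : -t ≤ phi t := by
  have h : Real.exp (-t) ≤ 1 + Real.exp (-t) := by nlinarith
  have := Real.log_le_log (Real.exp_pos (-t)) h
  rwa [Real.log_exp] at this

lemma phi_le (t : ℝ) : phi t ≤ Real.log 2 + |t| := by
  have h1 : Real.exp (-t) ≤ Real.exp |t| := Real.exp_le_exp.2 (neg_le_abs t)
  have h2 : (1:ℝ) ≤ Real.exp |t| := Real.one_le_exp (abs_nonneg t)
  have h3 : 1 + Real.exp (-t) ≤ 2 * Real.exp |t| := by nlinarith
  calc phi t ≤ Real.log (2 * Real.exp |t|) :=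
        Real.log_le_log (one_add_exp_pos (-t)) h3
    _ = Real.log 2 + |t| := by rw [Real.log_mul (by norm_num) (Real.exp_pos _).ne', Real.log_exp]

lemma hasDerivAt_phi (t : ℝ) : HasDerivAt phi (-(gfun t)) t := by
  have h1 : HasDerivAt (fun s : ℝ => 1 + Real.exp (-s)) (-Real.exp (-t)) t := by
    simpa using (((Real.hasDerivAt_exp (-t)).comp t (hasDerivAt_neg t)).const_add 1)
  have h2 : HasDerivAt phi ((1 + Real.exp (-t))⁻¹ * -Real.exp (-t)) t :=
    (Real.hasDerivAt_log (one_add_exp_pos (-t)).ne').comp t h1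
  convert h2 using 1
  have hmul : Real.exp (-t) * Real.exp t = 1 := by rw [← Real.exp_add]; simp
  rw [gfun]
  field_simp
  linear_combination hmul

/-- Mean value equality packaged: for all `a c`, `phi (a+c) - phi a ≤ -(c * gfun (a+c))`. -/
lemma phi_grad (a c : ℝ) : phi (a + c) - phi a ≤ -(c * gfun (a + c)) := by
  rcases lt_trichotomy c 0 with hc | hc | hc
  · have hab : a + c < a := by linarith
    obtain ⟨ξ, hξ, hslope⟩ := exists_hasDerivAt_eq_slope phi (fun s => -(gfun s)) hab
      continuous_phi.continuousOn (fun s _ => hasDerivAt_phi s)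
    have hξ2 : a + c ≤ ξ := hξ.1.le
    have hg : gfun ξ ≤ gfun (a + c) := gfun_antitone hξ2
    rw [eq_div_iff (show (a - (a + c)) ≠ 0 by intro h; simp at h; linarith)] at hslope
    have heq : phi (a + c) - phi a = -(c * gfun ξ) := by linear_combination hslope
    nlinarith [gfun_pos ξ]
  · simp [hc]
  · have hab : a < a + c := by linarith
    obtain ⟨ξ, hξ, hslope⟩ := exists_hasDerivAt_eq_slope phi (fun s => -(gfun s)) hab
      continuous_phi.continuousOn (fun s _ => hasDerivAt_phi s)
    have hξ2 : ξ ≤ a + c := hξ.2.le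
    have hg : gfun (a + c) ≤ gfun ξ := gfun_antitone hξ2
    rw [eq_div_iff (show (a + c - a) ≠ 0 by intro h; simp at h; linarith)] at hslope
    have heq : phi (a + c) - phi a = -(c * gfun ξ) := by linear_combination -hslope
    nlinarith [gfun_pos ξ]

lemma phi_lip (a b : ℝ) : |phi a - phi b| ≤ |a - b| := by
  have h1 := phi_grad b (a - b)
  have h2 := phi_grad a (b - a)
  simp only [add_sub_cancel] at h1 h2
  have g1 := gfun_pos a; have g2 := gfun_le_one a
  have g3 := gfun_pos b; have g4 := gfun_le_one b
  rw [abs_le]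
  constructor <;> [skip; skip] <;> rcases le_or_gt a b with h | h <;>
    rw [abs_sub_comm] at * <;> cases abs_cases (a - b) <;> cases abs_cases (b - a) <;> nlinarith

/-- `phi` is convex. -/
lemma convexOn_phi : ConvexOn ℝ Set.univ phi := by
  have grad : ∀ z x : ℝ, phi z + (-(gfun z)) * (x - z) ≤ phi x := by
    intro z x
    have := phi_grad x (z - x)
    simp only [add_sub_cancel] at this
    nlinarith
  refine ⟨convex_univ, fun x _ y _ a b ha hb hab => ?_⟩
  have h1 := grad (a • x + b • y) x
  have h2 := grad (a • x + b • y) y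
  simp only [smul_eq_mul] at *
  have key := add_le_add (mul_le_mul_of_nonneg_left h1 ha) (mul_le_mul_of_nonneg_left h2 hb)
  have hz : a * (phi (a*x+b*y) + -gfun (a*x+b*y) * (x - (a*x+b*y)))
      + b * (phi (a*x+b*y) + -gfun (a*x+b*y) * (y - (a*x+b*y))) = phi (a*x+b*y) := by
    linear_combination (phi (a*x+b*y) + gfun (a*x+b*y) * (a*x+b*y)) * hab
  linarith [key, hz]

end FTAPaux

open FTAPaux

/-- The support of the law of `ΔS` under `P`. -/
def lawSupport {Ω : Type*} [MeasurableSpace Ω] {d : ℕ} (P : Measure Ω)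
    (ΔS : Ω → EuclideanSpace ℝ (Fin d)) : Set (EuclideanSpace ℝ (Fin d)) :=
  ⋂₀ {A | IsClosed A ∧ ∀ᵐ ω ∂P, ΔS ω ∈ A}

/-- `N⊥(P)`, the span of the support of the law of `ΔS`. -/
def Nperp {Ω : Type*} [MeasurableSpace Ω] {d : ℕ} (P : Measure Ω)
    (ΔS : Ω → EuclideanSpace ℝ (Fin d)) : Submodule ℝ (EuclideanSpace ℝ (Fin d)) :=
  Submodule.span ℝ (lawSupport P ΔS)

/-- The cone generated by the projection of the constraint set `𝓗` onto `N⊥(P)`. -/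
def projCone {Ω : Type*} [MeasurableSpace Ω] {d : ℕ} (P : Measure Ω)
    (ΔS : Ω → EuclideanSpace ℝ (Fin d)) (𝓗 : Set (EuclideanSpace ℝ (Fin d))) :
    Set (EuclideanSpace ℝ (Fin d)) :=
  {x | ∃ c : ℝ, 0 ≤ c ∧ ∃ h ∈ 𝓗,
    x = c • ((Submodule.orthogonalProjectionOnto (Nperp P ΔS) h : EuclideanSpace ℝ (Fin d)))}

set_option maxHeartbeats 1600000

/-- one-period constrained FTAP under a single measure: NA(P) implies the
existence of an equivalent measure `Q` with bounded density, `E_Q|ΔS| < ∞` and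
`E_Q[H·ΔS] ≤ 0` for every admissible `H`. -/
theorem stmt1 {Ω : Type*} [TopologicalSpace Ω] [PolishSpace Ω] [MeasurableSpace Ω] [BorelSpace Ω]
    {d : ℕ} (P : Measure Ω) [IsProbabilityMeasure P]
    (ΔS : Ω → EuclideanSpace ℝ (Fin d)) (hmeas : Measurable ΔS)
    (hint : Integrable (fun ω => ‖ΔS ω‖) P)
    (𝓗 : Set (EuclideanSpace ℝ (Fin d)))
    (hCclosed : IsClosed (projCone P ΔS 𝓗)) (hCconvex : Convex ℝ (projCone P ΔS 𝓗))
    (hNA : ∀ H ∈ 𝓗, (∀ᵐ ω ∂P, 0 ≤ ⟪H, ΔS ω⟫) → (∀ᵐ ω ∂P, ⟪H, ΔS ω⟫ = 0)) :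
    ∃ Q : Measure Ω, IsProbabilityMeasure Q ∧ Q ≪ P ∧ P ≪ Q ∧
      (∃ c : ℝ≥0∞, c ≠ ⊤ ∧ ∀ᵐ ω ∂P, Q.rnDeriv P ω ≤ c) ∧
      Integrable (fun ω => ‖ΔS ω‖) Q ∧
      ∀ H ∈ 𝓗, ∫ ω, ⟪H, ΔS ω⟫ ∂Q ≤ 0 := by
  classical
  rcases Set.eq_empty_or_nonempty 𝓗 with h𝓗 | ⟨h₀, hh₀⟩
  · refine ⟨P, inferInstance, .rfl, .rfl, ⟨1, ENNReal.one_ne_top, ?_⟩, hint, by simp [h𝓗]⟩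
    filter_upwards [P.rnDeriv_self] with ω h
    rw [h]
  set C := projCone P ΔS 𝓗 with hCdef
  -- basic cone structure
  have hC0 : (0 : EuclideanSpace ℝ (Fin d)) ∈ C :=
    ⟨0, le_rfl, h₀, hh₀, by simp⟩
  have hCsmul : ∀ x ∈ C, ∀ t : ℝ, 0 ≤ t → t • x ∈ C := by
    rintro x ⟨c, hc, h, hh, rfl⟩ t ht
    exact ⟨t * c, mul_nonneg ht hc, h, hh, (smul_smul t c _)⟩
  have hCadd : ∀ x ∈ C, ∀ y ∈ C, x + y ∈ C := by
    intro x hx y hy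
    have hmid := hCconvex hx hy (by norm_num : (0:ℝ) ≤ 1/2) (by norm_num : (0:ℝ) ≤ 1/2)
      (by norm_num)
    have h2 := hCsmul _ hmid 2 (by norm_num)
    have : (2:ℝ) • ((1/2 : ℝ) • x + (1/2 : ℝ) • y) = x + y := by
      rw [smul_add, smul_smul, smul_smul]; norm_num
    rwa [this] at h2
  -- measurability and integrability of pairings
  have hbm : ∀ x : EuclideanSpace ℝ (Fin d), Measurable (fun ω => ⟪x, ΔS ω⟫) :=
    fun x => measurable_const.inner hmeas
  have hInt1 : ∀ x : EuclideanSpace ℝ (Fin d), Integrable (fun ω => ⟪x, ΔS ω⟫) P := by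
    intro x
    refine (hint.const_mul ‖x‖).mono' (hbm x).aestronglyMeasurable (ae_of_all _ fun ω => ?_)
    rw [Real.norm_eq_abs]
    exact abs_real_inner_le_norm x (ΔS ω)
  -- ΔS lies a.s. in the support of its law
  have hsupp : ∀ᵐ ω ∂P, ΔS ω ∈ lawSupport P ΔS := by
    set 𝒰 := {U : Set (EuclideanSpace ℝ (Fin d)) | IsOpen U ∧ P (ΔS ⁻¹' U) = 0} with h𝒰
    have hsubset : (lawSupport P ΔS)ᶜ ⊆ ⋃₀ 𝒰 := by
      intro x hx
      rw [Set.mem_compl_iff, lawSupport, Set.mem_sInter] at hx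
      push_neg at hx
      obtain ⟨A, ⟨hAclosed, hAae⟩, hxA⟩ := hx
      refine ⟨Aᶜ, ⟨hAclosed.isOpen_compl, ?_⟩, hxA⟩
      rw [ae_iff] at hAae
      have hseteq : ΔS ⁻¹' Aᶜ = {ω | ¬ ΔS ω ∈ A} := rfl
      rw [hseteq, hAae]
    obtain ⟨T, hTc, hTsub, hTU⟩ := TopologicalSpace.isOpen_sUnion_countable 𝒰 (fun U hU => hU.1)
    have hnull : P (ΔS ⁻¹' ⋃₀ T) = 0 := by
      rw [Set.preimage_sUnion]
      exact (measure_biUnion_null_iff hTc).2 fun U hU => (hTsub hU).2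
    rw [ae_iff]
    refine measure_mono_null (fun ω hω => ?_) hnull
    rw [hTU]
    exact hsubset hω
  -- vectors orthogonal to Nperp pair to zero a.s.
  have hperpz : ∀ v ∈ (Nperp P ΔS)ᗮ, ∀ᵐ ω ∂P, ⟪v, ΔS ω⟫ = 0 := by
    intro v hv
    filter_upwards [hsupp] with ω hω
    have hmem : ΔS ω ∈ Nperp P ΔS := Submodule.subset_span hω
    have := (Submodule.mem_orthogonal (Nperp P ΔS) v).1 hv _ hmem
    rwa [real_inner_comm] at this
  have hproj_ae : ∀ h : EuclideanSpace ℝ (Fin d), ∀ᵐ ω ∂P,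
      ⟪(Submodule.orthogonalProjectionOnto (Nperp P ΔS) h : EuclideanSpace ℝ (Fin d)), ΔS ω⟫ = ⟪h, ΔS ω⟫ := by
    intro h
    filter_upwards [hperpz _ (Submodule.sub_starProjection_mem_orthogonal
      (K := Nperp P ΔS) h)] with ω hω
    rw [inner_sub_left, Submodule.starProjection_apply] at hω
    linarith
  -- vanishing pairing forces zero within Nperp
  have hker : ∀ x : EuclideanSpace ℝ (Fin d), x ∈ Nperp P ΔS →
      (∀ᵐ ω ∂P, ⟪x, ΔS ω⟫ = 0) → x = 0 := by
    intro x hx hae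
    have hA : lawSupport P ΔS ⊆ {y | ⟪x, y⟫ = 0} := by
      apply Set.sInter_subset_of_mem
      exact ⟨isClosed_eq (continuous_const.inner continuous_id) continuous_const, hae⟩
    have hle : Nperp P ΔS ≤ LinearMap.ker (innerSL ℝ x : _ →L[ℝ] ℝ).toLinearMap := by
      rw [Nperp, Submodule.span_le]
      intro y hy
      exact hA hy
    have : ⟪x, x⟫ = 0 := hle hx
    exact inner_self_eq_zero.1 this
  have hCNperp : ∀ x ∈ C, x ∈ Nperp P ΔS := by
    rintro x ⟨c, hc, h, hh, rfl⟩
    exact Submodule.smul_mem _ _ (Submodule.orthogonalProjectionOnto (Nperp P ΔS) h).2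
  -- no-arbitrage on the cone: nonzero elements have positive probability of loss
  have hpos : ∀ x ∈ C, x ≠ 0 → 0 < P {ω | ⟪x, ΔS ω⟫ < 0} := by
    intro x hxC hx0
    rw [pos_iff_ne_zero]
    intro h0
    have hge : ∀ᵐ ω ∂P, 0 ≤ ⟪x, ΔS ω⟫ := by
      rw [ae_iff]
      have hseteq : {ω | ¬ 0 ≤ ⟪x, ΔS ω⟫} = {ω | ⟪x, ΔS ω⟫ < 0} := by
        ext ω; simp [not_le]
      rw [hseteq, h0]
    obtain ⟨c, hc, h, hh, hxeq⟩ := id hxC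
    have hcpos : 0 < c := by
      rcases hc.lt_or_eq with h' | h'
      · exact h'
      · exfalso; apply hx0; rw [hxeq, ← h', zero_smul]
    have hge' : ∀ᵐ ω ∂P, 0 ≤ ⟪h, ΔS ω⟫ := by
      filter_upwards [hge, hproj_ae h] with ω h1 h2
      rw [hxeq, real_inner_smul_left] at h1
      nlinarith
    have hzero := hNA h hh hge'
    apply hx0
    apply hker x (hCNperp x hxC)
    filter_upwards [hzero, hproj_ae h] with ω h1 h2
    rw [hxeq, real_inner_smul_left, h2, h1, mul_zero]
  -- the objective function
  set u : EuclideanSpace ℝ (Fin d) → ℝ := fun x => ∫ ω, phi ⟪x, ΔS ω⟫ ∂P with hu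
  have hIntφ : ∀ x : EuclideanSpace ℝ (Fin d),
      Integrable (fun ω => phi ⟪x, ΔS ω⟫) P := by
    intro x
    refine ((hint.const_mul ‖x‖).add (integrable_const (Real.log 2))).mono'
      ((continuous_phi.measurable.comp (hbm x)).aestronglyMeasurable)
      (ae_of_all _ fun ω => ?_)
    rw [Real.norm_eq_abs, abs_of_nonneg (phi_nonneg _)]
    have h1 := phi_le ⟪x, ΔS ω⟫
    have h2 : |⟪x, ΔS ω⟫| ≤ ‖x‖ * ‖ΔS ω‖ := abs_real_inner_le_norm x (ΔS ω)
    simp only [Pi.add_apply]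
    linarith
  have hIntg : ∀ (w : Ω → ℝ), Measurable w → ∀ x : EuclideanSpace ℝ (Fin d),
      Integrable (fun ω => gfun (w ω) * ⟪x, ΔS ω⟫) P := by
    intro w hw x
    refine (hint.const_mul ‖x‖).mono'
      (((continuous_gfun.measurable.comp hw).mul (hbm x)).aestronglyMeasurable)
      (ae_of_all _ fun ω => ?_)
    rw [Real.norm_eq_abs, abs_mul, abs_of_nonneg (gfun_pos _).le]
    have h2 : |⟪x, ΔS ω⟫| ≤ ‖x‖ * ‖ΔS ω‖ := abs_real_inner_le_norm x (ΔS ω)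
    nlinarith [gfun_pos (w ω), gfun_le_one (w ω), abs_nonneg ⟪x, ΔS ω⟫]
  -- convexity of u
  have huconv : ∀ (x y : EuclideanSpace ℝ (Fin d)) (a b : ℝ), 0 ≤ a → 0 ≤ b → a + b = 1 →
      u (a • x + b • y) ≤ a * u x + b * u y := by
    intro x y a b ha hb hab
    have hpt : ∀ ω, phi ⟪a • x + b • y, ΔS ω⟫ ≤ a * phi ⟪x, ΔS ω⟫ + b * phi ⟪y, ΔS ω⟫ := by
      intro ω
      have h := convexOn_phi.2 (Set.mem_univ ⟪x, ΔS ω⟫) (Set.mem_univ ⟪y, ΔS ω⟫) ha hb hab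
      have heq : ⟪a • x + b • y, ΔS ω⟫ = a * ⟪x, ΔS ω⟫ + b * ⟪y, ΔS ω⟫ := by
        rw [inner_add_left, real_inner_smul_left, real_inner_smul_left]
      rw [heq]
      simpa using h
    calc u (a • x + b • y) ≤ ∫ ω, (a * phi ⟪x, ΔS ω⟫ + b * phi ⟪y, ΔS ω⟫) ∂P := by
          exact integral_mono (hIntφ _) (((hIntφ x).const_mul a).add ((hIntφ y).const_mul b)) hpt
      _ = a * u x + b * u y := by
          rw [integral_add ((hIntφ x).const_mul a) ((hIntφ y).const_mul b),
            integral_const_mul, integral_const_mul]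
  -- u is Lipschitz hence continuous
  have hucont : Continuous u := by
    have key : ∀ x y : EuclideanSpace ℝ (Fin d),
        |u x - u y| ≤ ‖x - y‖ * ∫ ω, ‖ΔS ω‖ ∂P := by
      intro x y
      rw [hu, ← integral_sub (hIntφ x) (hIntφ y)]
      calc |∫ ω, (phi ⟪x, ΔS ω⟫ - phi ⟪y, ΔS ω⟫) ∂P|
          ≤ ∫ ω, |phi ⟪x, ΔS ω⟫ - phi ⟪y, ΔS ω⟫| ∂P := by
            simpa [Real.norm_eq_abs] using
              norm_integral_le_integral_norm (fun ω => phi ⟪x, ΔS ω⟫ - phi ⟪y, ΔS ω⟫) (μ := P)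
        _ ≤ ∫ ω, ‖x - y‖ * ‖ΔS ω‖ ∂P := by
            refine integral_mono ((hIntφ x).sub (hIntφ y)).abs (hint.const_mul _)
              (fun ω => ?_)
            have h1 := phi_lip ⟪x, ΔS ω⟫ ⟪y, ΔS ω⟫
            have h2 : ⟪x, ΔS ω⟫ - ⟪y, ΔS ω⟫ = ⟪x - y, ΔS ω⟫ := (inner_sub_left _ _ _).symm
            rw [h2] at h1
            exact h1.trans (abs_real_inner_le_norm _ _)
        _ = ‖x - y‖ * ∫ ω, ‖ΔS ω‖ ∂P := integral_const_mul _ _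
    have : LipschitzWith (Real.toNNReal (∫ ω, ‖ΔS ω‖ ∂P)) u := by
      refine LipschitzWith.of_dist_le_mul (fun x y => ?_)
      rw [Real.dist_eq, dist_eq_norm]
      calc |u x - u y| ≤ ‖x - y‖ * ∫ ω, ‖ΔS ω‖ ∂P := key x y
        _ = (Real.toNNReal (∫ ω, ‖ΔS ω‖ ∂P) : ℝ) * ‖x - y‖ := by
            rw [Real.coe_toNNReal _ (integral_nonneg (fun ω => norm_nonneg _)), mul_comm]
    exact this.continuous
  -- growth along nonzero cone directions
  have hgrow : ∀ ξ ∈ C, ξ ≠ 0 → Tendsto (fun t : ℝ => u (t • ξ)) atTop atTop := by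
    intro ξ hξC hξ0
    have hp := hpos ξ hξC hξ0
    -- find a set of positive measure where the pairing is ≤ -ε
    have hUnion : {ω | ⟪ξ, ΔS ω⟫ < 0} = ⋃ n : ℕ, {ω | ⟪ξ, ΔS ω⟫ ≤ -(1/(n+1))} := by
      ext ω
      simp only [Set.mem_setOf_eq, Set.mem_iUnion]
      constructor
      · intro hlt
        obtain ⟨n, hn⟩ := exists_nat_one_div_lt (show (0:ℝ) < -⟪ξ, ΔS ω⟫ by linarith)
        exact ⟨n, by push_cast at hn ⊢; linarith⟩
      · rintro ⟨n, hn⟩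
        have : (0:ℝ) < 1/(n+1) := by positivity
        linarith
    obtain ⟨n, hn⟩ : ∃ n : ℕ, P {ω | ⟪ξ, ΔS ω⟫ ≤ -(1/(n+1))} ≠ 0 := by
      by_contra hcon
      push_neg at hcon
      rw [hUnion] at hp
      rw [measure_iUnion_null hcon] at hp
      exact lt_irrefl _ hp
    set A := {ω | ⟪ξ, ΔS ω⟫ ≤ -(1/(n+1))} with hA
    have hAmeas : MeasurableSet A := (hbm ξ) measurableSet_Iic
    set δ := (P A).toReal with hδ
    have hδpos : 0 < δ := ENNReal.toReal_pos hn (measure_ne_top P A)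
    have hlb : ∀ t : ℝ, 0 ≤ t → t * ((1/(n+1)) * δ) ≤ u (t • ξ) := by
      intro t ht
      have hind : ∀ ω, A.indicator (fun _ => t * (1/(n+1))) ω ≤ phi ⟪t • ξ, ΔS ω⟫ := by
        intro ω
        rw [real_inner_smul_left]
        by_cases hω : ω ∈ A
        · rw [Set.indicator_of_mem hω]
          have h1 : ⟪ξ, ΔS ω⟫ ≤ -(1/(n+1)) := hω
          have h2 := neg_le_phi (t * ⟪ξ, ΔS ω⟫)
          nlinarith
        · rw [Set.indicator_of_notMem hω]
          exact phi_nonneg _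
      have hIint : Integrable (A.indicator (fun _ => t * (1/(n+1)))) P :=
        (integrable_const _).indicator hAmeas
      calc t * ((1/(n+1)) * δ) = ∫ ω, A.indicator (fun _ => t * (1/(n+1))) ω ∂P := by
            rw [integral_indicator_const _ hAmeas]
            simp only [smul_eq_mul, hδ, measureReal_def]
            ring
        _ ≤ ∫ ω, phi ⟪t • ξ, ΔS ω⟫ ∂P := integral_mono hIint (hIntφ _) hind
    have hcoef : 0 < (1/((n:ℝ)+1)) * δ := by positivity
    apply tendsto_atTop_mono' atTop
    · filter_upwards [eventually_ge_atTop (0:ℝ)] with t ht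
      exact hlb t ht
    · exact Tendsto.atTop_mul_const hcoef tendsto_id
  -- sublevel sets of u on C are bounded
  have hsub : ∃ R : ℝ, 0 ≤ R ∧ ∀ x ∈ C, u x ≤ u 0 → ‖x‖ ≤ R := by
    by_contra hcon
    push_neg at hcon
    have hcon' : ∀ n : ℕ, ∃ x, x ∈ C ∧ u x ≤ u 0 ∧ (n:ℝ) < ‖x‖ := by
      intro n
      obtain ⟨x, hx1, hx2, hx3⟩ := hcon n (Nat.cast_nonneg n)
      exact ⟨x, hx1, hx2, hx3⟩
    choose x hxC hxu hxn using hcon'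
    have hxpos : ∀ n : ℕ, 0 < ‖x n‖ := fun n =>
      lt_of_le_of_lt (Nat.cast_nonneg n) (hxn n)
    set ξ : ℕ → EuclideanSpace ℝ (Fin d) := fun n => ‖x n‖⁻¹ • x n with hξdef
    have hξC : ∀ n, ξ n ∈ C := fun n =>
      hCsmul _ (hxC n) _ (inv_nonneg.2 (hxpos n).le)
    have hξs : ∀ n, ξ n ∈ Metric.sphere (0 : EuclideanSpace ℝ (Fin d)) 1 := by
      intro n
      rw [Metric.mem_sphere, dist_zero_right, hξdef]
      rw [norm_smul, norm_inv, Real.norm_eq_abs, abs_of_pos (hxpos n)]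
      exact inv_mul_cancel₀ (hxpos n).ne'
    obtain ⟨ℓ, hℓs, φm, hφmono, hφconv⟩ :=
      (isCompact_sphere (0 : EuclideanSpace ℝ (Fin d)) 1).tendsto_subseq hξs
    have hℓC : ℓ ∈ C := hCclosed.mem_of_tendsto hφconv (Eventually.of_forall fun k => hξC _)
    have hℓ0 : ℓ ≠ 0 := by
      intro h
      rw [h] at hℓs
      simp at hℓs
    -- u (t • ℓ) ≤ u 0 for all t ≥ 0
    have hbd : ∀ t : ℝ, 0 ≤ t → u (t • ℓ) ≤ u 0 := by
      intro t ht
      have hlim : Tendsto (fun k => u (t • ξ (φm k))) atTop (nhds (u (t • ℓ))) :=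
        (hucont.tendsto _).comp (hφconv.const_smul t)
      refine le_of_tendsto hlim ?_
      have hlarge : ∀ᶠ k : ℕ in atTop, t ≤ ‖x (φm k)‖ := by
        obtain ⟨N, hN⟩ := exists_nat_ge t
        filter_upwards [eventually_ge_atTop N] with k hk
        have h1 : (N:ℝ) ≤ (φm k : ℝ) := by
          exact_mod_cast hk.trans (hφmono.id_le k)
        linarith [hxn (φm k), hN]
      filter_upwards [hlarge] with k hk
      set n := φm k
      set s := t / ‖x n‖ with hs
      have hs0 : 0 ≤ s := div_nonneg ht (hxpos n).le
      have hs1 : s ≤ 1 := (div_le_one (hxpos n)).2 hk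
      have heq : t • ξ n = (1 - s) • (0 : EuclideanSpace ℝ (Fin d)) + s • x n := by
        rw [smul_zero, zero_add, hξdef, smul_smul, hs, div_eq_mul_inv]
      calc u (t • ξ n) = u ((1 - s) • (0 : EuclideanSpace ℝ (Fin d)) + s • x n) := by rw [heq]
        _ ≤ (1 - s) * u 0 + s * u (x n) :=
            huconv _ _ _ _ (by linarith) hs0 (by ring)
        _ ≤ (1 - s) * u 0 + s * u 0 := by nlinarith [hxu n]
        _ = u 0 := by ring
    obtain ⟨t, ht0, htb⟩ : ∃ t : ℝ, 0 ≤ t ∧ u 0 < u (t • ℓ) := by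
      have := (hgrow ℓ hℓC hℓ0).eventually_gt_atTop (u 0)
      obtain ⟨t, ht⟩ := (this.and (eventually_ge_atTop (0:ℝ))).exists
      exact ⟨t, ht.2, ht.1⟩
    exact absurd (hbd t ht0) (not_le.2 htb)
  -- existence of a minimizer of u over C
  obtain ⟨R, hR0, hRb⟩ := hsub
  set K := C ∩ Metric.closedBall (0 : EuclideanSpace ℝ (Fin d)) R with hK
  have hKcpt : IsCompact K := (isCompact_closedBall _ _).inter_left hCclosed
  have hK0 : (0 : EuclideanSpace ℝ (Fin d)) ∈ K :=
    ⟨hC0, by simpa [Metric.mem_closedBall] using hR0⟩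
  obtain ⟨H, hHK, hHmin⟩ := hKcpt.exists_isMinOn ⟨0, hK0⟩ hucont.continuousOn
  have hHC : H ∈ C := hHK.1
  have hHglobal : ∀ x ∈ C, u H ≤ u x := by
    intro x hx
    by_contra hlt
    push_neg at hlt
    have hx0 : u x ≤ u 0 := le_of_lt (lt_of_lt_of_le hlt (hHmin hK0))
    have hxK : x ∈ K := ⟨hx, by
      rw [Metric.mem_closedBall, dist_zero_right]
      exact hRb x hx hx0⟩
    exact absurd (hHmin hxK) (not_le.2 hlt)
  -- first-order condition at the minimizer
  set gw : Ω → ℝ := fun ω => gfun ⟪H, ΔS ω⟫ with hgw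
  have hgwmeas : Measurable gw := continuous_gfun.measurable.comp (hbm H)
  have hgwpos : ∀ ω, 0 < gw ω := fun ω => gfun_pos _
  have hgwle : ∀ ω, gw ω ≤ 1 := fun ω => gfun_le_one _
  have hfoc : ∀ x ∈ C, ∫ ω, gw ω * ⟪x, ΔS ω⟫ ∂P ≤ 0 := by
    intro x hx
    have hstep : ∀ t : ℝ, 0 < t →
        ∫ ω, gfun (⟪H, ΔS ω⟫ + t * ⟪x, ΔS ω⟫) * ⟪x, ΔS ω⟫ ∂P ≤ 0 := by
      intro t ht
      have hmem : H + t • x ∈ C := hCadd H hHC _ (hCsmul x hx t ht.le)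
      have hmin : u H ≤ u (H + t • x) := hHglobal _ hmem
      have hinner : ∀ ω, ⟪H + t • x, ΔS ω⟫ = ⟪H, ΔS ω⟫ + t * ⟪x, ΔS ω⟫ := by
        intro ω
        rw [inner_add_left, real_inner_smul_left]
      have hwmeas : Measurable (fun ω => ⟪H, ΔS ω⟫ + t * ⟪x, ΔS ω⟫) :=
        (hbm H).add ((hbm x).const_mul t)
      have hIr : Integrable
          (fun ω => -(t * (gfun (⟪H, ΔS ω⟫ + t * ⟪x, ΔS ω⟫) * ⟪x, ΔS ω⟫))) P :=
        ((hIntg _ hwmeas x).const_mul t).neg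
      have hptineq : ∀ ω, phi ⟪H + t • x, ΔS ω⟫ - phi ⟪H, ΔS ω⟫ ≤
          -(t * (gfun (⟪H, ΔS ω⟫ + t * ⟪x, ΔS ω⟫) * ⟪x, ΔS ω⟫)) := by
        intro ω
        have := phi_grad ⟪H, ΔS ω⟫ (t * ⟪x, ΔS ω⟫)
        rw [hinner ω]
        nlinarith [this]
      have hI : u (H + t • x) - u H ≤
          ∫ ω, -(t * (gfun (⟪H, ΔS ω⟫ + t * ⟪x, ΔS ω⟫) * ⟪x, ΔS ω⟫)) ∂P := by
        rw [hu, ← integral_sub (hIntφ _) (hIntφ _)]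
        exact integral_mono ((hIntφ _).sub (hIntφ _)) hIr hptineq
      rw [integral_neg, integral_const_mul] at hI
      have h2 : 0 ≤ -(t * ∫ ω, gfun (⟪H, ΔS ω⟫ + t * ⟪x, ΔS ω⟫) * ⟪x, ΔS ω⟫ ∂P) := by
        linarith
      nlinarith [h2]
    have hlim : Tendsto
        (fun n : ℕ => ∫ ω, gfun (⟪H, ΔS ω⟫ + (1/(n+1)) * ⟪x, ΔS ω⟫) * ⟪x, ΔS ω⟫ ∂P)
        atTop (nhds (∫ ω, gw ω * ⟪x, ΔS ω⟫ ∂P)) := by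
      apply tendsto_integral_of_dominated_convergence (fun ω => ‖x‖ * ‖ΔS ω‖)
      · intro n
        exact ((continuous_gfun.measurable.comp
          ((hbm H).add ((hbm x).const_mul _))).mul (hbm x)).aestronglyMeasurable
      · exact hint.const_mul _
      · intro n
        refine ae_of_all _ fun ω => ?_
        rw [Real.norm_eq_abs, abs_mul, abs_of_nonneg (gfun_pos _).le]
        have h2 : |⟪x, ΔS ω⟫| ≤ ‖x‖ * ‖ΔS ω‖ := abs_real_inner_le_norm x (ΔS ω)
        nlinarith [gfun_pos (⟪H, ΔS ω⟫ + (1/((n:ℝ)+1)) * ⟪x, ΔS ω⟫),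
          gfun_le_one (⟪H, ΔS ω⟫ + (1/((n:ℝ)+1)) * ⟪x, ΔS ω⟫), abs_nonneg ⟪x, ΔS ω⟫]
      · refine ae_of_all _ fun ω => ?_
        have h1 : Tendsto (fun n : ℕ => ⟪H, ΔS ω⟫ + (1/(n+1)) * ⟪x, ΔS ω⟫) atTop
            (nhds ⟪H, ΔS ω⟫) := by
          have h0 : Tendsto (fun n : ℕ => (1:ℝ)/(n+1)) atTop (nhds 0) :=
            tendsto_one_div_add_atTop_nhds_zero_nat
          have h3 := (h0.mul_const ⟪x, ΔS ω⟫).const_add ⟪H, ΔS ω⟫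
          rw [show ⟪H, ΔS ω⟫ + 0 * ⟪x, ΔS ω⟫ = ⟪H, ΔS ω⟫ by ring] at h3
          exact h3
        have h2 := ((continuous_gfun.tendsto _).comp h1).mul_const ⟪x, ΔS ω⟫
        exact h2
    refine le_of_tendsto hlim (Eventually.of_forall fun n => hstep _ (by positivity))
  -- construction of the measure Q
  have hgwInt : Integrable gw P := by
    refine (integrable_const (1:ℝ)).mono' hgwmeas.aestronglyMeasurable
      (ae_of_all _ fun ω => ?_)
    rw [Real.norm_eq_abs, abs_of_pos (hgwpos ω)]
    exact hgwle ω
  set Z := ∫ ω, gw ω ∂P with hZ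
  have hZpos : 0 < Z := by
    rw [hZ]
    rw [integral_pos_iff_support_of_nonneg (fun ω => (hgwpos ω).le) hgwInt]
    have : Function.support gw = Set.univ := by
      ext ω; simp [Function.mem_support, (hgwpos ω).ne']
    rw [this]
    simp
  set ρ : Ω → NNReal := fun ω => Real.toNNReal (gw ω / Z) with hρ
  have hρmeas : Measurable ρ := (hgwmeas.div_const Z).real_toNNReal
  set Q := P.withDensity (fun ω => (ρ ω : ℝ≥0∞)) with hQ
  have hcoe : ∀ ω, ((ρ ω : NNReal) : ℝ≥0∞) = ENNReal.ofReal (gw ω / Z) := fun ω => rfl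
  have hρInt : Integrable (fun ω => gw ω / Z) P := hgwInt.div_const Z
  have hρnonneg : ∀ ω, 0 ≤ gw ω / Z := fun ω => div_nonneg (hgwpos ω).le hZpos.le
  have hQprob : IsProbabilityMeasure Q := by
    constructor
    rw [hQ, withDensity_apply _ MeasurableSet.univ, Measure.restrict_univ]
    have : ∫⁻ ω, ((ρ ω : NNReal) : ℝ≥0∞) ∂P = ENNReal.ofReal (∫ ω, gw ω / Z ∂P) := by
      simp only [hcoe]
      rw [← ofReal_integral_eq_lintegral_ofReal hρInt (ae_of_all _ hρnonneg)]
    rw [this, integral_div, ← hZ, div_self hZpos.ne']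
    simp
  refine ⟨Q, hQprob, withDensity_absolutelyContinuous _ _, ?_, ?_, ?_, ?_⟩
  · -- P ≪ Q
    refine withDensity_absolutelyContinuous' (hρmeas.coe_nnreal_ennreal).aemeasurable
      (ae_of_all _ fun ω => ?_)
    rw [hcoe]
    simp only [ne_eq, ENNReal.ofReal_eq_zero, not_le]
    exact div_pos (hgwpos ω) hZpos
  · -- bounded density
    refine ⟨ENNReal.ofReal (1/Z), ENNReal.ofReal_ne_top, ?_⟩
    have hrn := Measure.rnDeriv_withDensity P (hρmeas.coe_nnreal_ennreal)
    rw [← hQ] at hrn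
    filter_upwards [hrn] with ω hω
    rw [hω, hcoe]
    apply ENNReal.ofReal_le_ofReal
    rw [div_le_div_iff₀ hZpos hZpos, one_mul]
    nlinarith [hgwle ω, hZpos]
  · -- integrability of ‖ΔS‖ under Q
    have hQle : Q ≤ ENNReal.ofReal (1/Z) • P := by
      rw [hQ, ← withDensity_const]
      refine withDensity_mono (ae_of_all _ fun ω => ?_)
      simp only [hcoe]
      apply ENNReal.ofReal_le_ofReal
      rw [div_le_div_iff₀ hZpos hZpos, one_mul]
      nlinarith [hgwle ω, hZpos]
    exact (hint.smul_measure ENNReal.ofReal_ne_top).mono_measure hQle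
  · -- the martingale-type inequality
    intro H' hH'
    have hxC : (Submodule.orthogonalProjectionOnto (Nperp P ΔS) H' : EuclideanSpace ℝ (Fin d)) ∈ C :=
      ⟨1, zero_le_one, H', hH', (one_smul _ _).symm⟩
    have h1 := hfoc _ hxC
    rw [hQ, integral_withDensity_eq_integral_smul hρmeas]
    have heq : (fun ω => ρ ω • ⟪H', ΔS ω⟫) =ᵐ[P]
        (fun ω => Z⁻¹ * (gw ω * ⟪(Submodule.orthogonalProjectionOnto (Nperp P ΔS) H' :
          EuclideanSpace ℝ (Fin d)), ΔS ω⟫)) := by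
      filter_upwards [hproj_ae H'] with ω hω
      rw [hρ]
      simp only [NNReal.smul_def, Real.coe_toNNReal _ (hρnonneg ω)]
      rw [hω, smul_eq_mul]
      ring
    rw [integral_congr_ae heq, integral_const_mul]
    have hZinv : (0:ℝ) ≤ Z⁻¹ := inv_nonneg.2 hZpos.le
    nlinarith [h1, hZinv, mul_le_mul_of_nonneg_left h1 hZinv]
end
end

section
/- Consider Ω = [1,2] with a one-period market: S₀ = (1,1), S₁(s) = (s,0), and P the uniform distribution on [1,2], so ΔS(s) = (s−1,−1). Let H := {(h₁,h₂) ∈ ℝ² : h₁² + (h₂−1)² ≤ 1} be the admissible strategies. Then: (a) NA(P) holds, i.e., for all H ∈ H, H·ΔS ≥ 0 P-a.s. implies H·ΔS = 0 P-a.s.; (b) there exists NO probability measure Q equivalent to P with E_Q[H·ΔS] ≤ 0 for all H ∈ H; (c) the generated cone {cH : c ≥ 0, H ∈ H} = {(h₁,h₂) : h₂ > 0} ∪ {(0,0)} is not closed. -/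
open MeasureTheory Filter Set
open scoped ENNReal

noncomputable section

/-- The uniform distribution on `[1,2]`. -/
def Punif : Measure ℝ := volume.restrict (Set.Icc (1 : ℝ) 2)

/-- The price increment of the two stocks: `ΔS(s) = (s - 1, -1)`. -/
def ΔS2 (s : ℝ) : ℝ × ℝ := (s - 1, -1)

/-- The constrained strategies: the closed disc of radius 1 centered at `(0,1)`. -/
def 𝓗2 : Set (ℝ × ℝ) := {h | h.1 ^ 2 + (h.2 - 1) ^ 2 ≤ 1}

/-- The gain of strategy `h` in scenario `s`. -/
def gain2 (h : ℝ × ℝ) (s : ℝ) : ℝ := h.1 * (s - 1) - h.2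

lemma partA : ∀ h ∈ 𝓗2, (∀ᵐ s ∂Punif, 0 ≤ gain2 h s) → (∀ᵐ s ∂Punif, gain2 h s = 0) := by
  intro h hh ha
  have hdisc : h.1 ^ 2 + (h.2 - 1) ^ 2 ≤ 1 := hh
  rcases le_or_gt h.2 0 with h2 | h2
  · -- then h.2 = 0 and h.1 = 0
    have h1 : h.1 = 0 := by nlinarith [sq_nonneg h.1, sq_nonneg (h.2-1)]
    have h20 : h.2 = 0 := by nlinarith [sq_nonneg h.1]
    filter_upwards with s
    simp [gain2, h1, h20]
  · exfalso
    set δ : ℝ := min (h.2 / (|h.1| + 1)) 1 with hδ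
    have hδpos : 0 < δ := lt_min (div_pos h2 (by positivity)) one_pos
    have hδ1 : δ ≤ 1 := min_le_right _ _
    have hsub : Ico (1:ℝ) (1 + δ) ⊆ {s | gain2 h s < 0} := by
      intro s hs
      have hs1 : 1 ≤ s := hs.1
      have hs2 : s - 1 < δ := by linarith [hs.2]
      have hb : h.1 * (s - 1) ≤ |h.1| * (s - 1) :=
        mul_le_mul_of_nonneg_right (le_abs_self _) (by linarith)
      have hδle : δ ≤ h.2 / (|h.1| + 1) := min_le_left _ _
      have : |h.1| * δ < h.2 := by
        have habs : (0:ℝ) ≤ |h.1| := abs_nonneg _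
        have : |h.1| * δ ≤ |h.1| * (h.2 / (|h.1| + 1)) :=
          mul_le_mul_of_nonneg_left hδle habs
        have hlt : |h.1| * (h.2 / (|h.1| + 1)) < h.2 := by
          rw [mul_div_assoc']
          rw [div_lt_iff₀ (by positivity)]
          nlinarith
        linarith
      have : h.1 * (s - 1) < h.2 := by
        calc h.1 * (s-1) ≤ |h.1| * (s-1) := hb
        _ ≤ |h.1| * δ := mul_le_mul_of_nonneg_left (le_of_lt hs2) (abs_nonneg _)
        _ < h.2 := this
      simpa [gain2] using by linarith
    have hmeas0 : Punif {s | gain2 h s < 0} = 0 := by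
      have := ha
      rw [ae_iff] at this
      convert this using 2
      ext s; simp [not_le]
    have h0 : Punif (Ico (1:ℝ) (1+δ)) = 0 := measure_mono_null hsub hmeas0
    rw [Punif, Measure.restrict_apply measurableSet_Ico] at h0
    have hIcc : Ico (1:ℝ) (1+δ) ∩ Icc 1 2 = Ico 1 (1+δ) := by
      apply inter_eq_left.mpr
      intro s hs
      exact ⟨hs.1, by linarith [hs.2, hδ1]⟩
    rw [hIcc, Real.volume_Ico] at h0
    simp only [ENNReal.ofReal_eq_zero] at h0
    linarith

lemma partB : ¬ ∃ Q : Measure ℝ, IsProbabilityMeasure Q ∧ Q ≪ Punif ∧ Punif ≪ Q ∧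
      Integrable (fun s => s) Q ∧ ∀ h ∈ 𝓗2, ∫ s, gain2 h s ∂Q ≤ 0 := by
  rintro ⟨Q, hQprob, hQP, hPQ, hint, hsup⟩
  -- Q-a.e., s ∈ [1,2]
  have haeP : ∀ᵐ s ∂Punif, s ∈ Icc (1:ℝ) 2 := ae_restrict_mem measurableSet_Icc
  have haeQ : ∀ᵐ s ∂Q, s ∈ Icc (1:ℝ) 2 := hQP.ae_le haeP
  have hint1 : Integrable (fun s => s - 1) Q := hint.sub (integrable_const 1)
  set I : ℝ := ∫ s, (s - 1) ∂Q with hI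
  -- I > 0
  have hQ1 : Q {(1:ℝ)} = 0 := hQP (by
    rw [Punif, Measure.restrict_apply (measurableSet_singleton 1)]
    exact measure_mono_null (inter_subset_left) (by simp))
  have hnn : 0 ≤ᵐ[Q] fun s => s - 1 := by
    filter_upwards [haeQ] with s hs
    simp only [Pi.zero_apply]; linarith [hs.1]
  have hIpos : 0 < I := by
    rw [hI, MeasureTheory.integral_pos_iff_support_of_nonneg_ae hnn hint1]
    have hsupp : Function.support (fun s : ℝ => s - 1) = {(1:ℝ)}ᶜ := by
      ext s; simp [Function.support, sub_eq_zero]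
    rw [hsupp]
    have : Q {(1:ℝ)}ᶜ = 1 := by
      rw [measure_compl (measurableSet_singleton 1) (measure_ne_top _ _), hQ1,
        measure_univ]
      simp
    rw [this]; norm_num
  -- choose the strategy
  set b : ℝ := I^2 / (1 + I^2) with hb
  have hbpos : 0 < b := by positivity
  have hb1 : b < 1 := by
    rw [hb, div_lt_one (by positivity)]; nlinarith
  set a : ℝ := Real.sqrt (b * (2 - b)) with ha
  have hapos : 0 < a := Real.sqrt_pos.mpr (by nlinarith)
  have ha2 : a ^ 2 = b * (2 - b) := Real.sq_sqrt (by nlinarith)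
  have hmem : ((a, b) : ℝ × ℝ) ∈ 𝓗2 := by
    show a ^ 2 + (b - 1) ^ 2 ≤ 1
    rw [ha2]; nlinarith
  have hgain : ∫ s, gain2 (a, b) s ∂Q = a * I - b := by
    have : ∫ s, gain2 (a, b) s ∂Q = ∫ s, (a * (s - 1) - b) ∂Q := by
      simp [gain2]
    rw [this, integral_sub (hint1.const_mul a) (integrable_const b),
      MeasureTheory.integral_const_mul, integral_const]
    simp [← hI, measure_univ]
  have hle := hsup (a, b) hmem
  rw [hgain] at hle
  -- but a * I > b
  have hkey : b < a * I := by
    have h1 : b ^ 2 < a ^ 2 * I ^ 2 := by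
      rw [ha2]
      have : I ^ 2 * (2 - b) > b := by
        have : b * (1 + I^2) = I^2 := by rw [hb]; exact div_mul_cancel₀ _ (by positivity)
        nlinarith
      nlinarith
    nlinarith [mul_pos hapos hIpos]
  linarith

lemma coneEq : {x : ℝ × ℝ | ∃ c : ℝ, 0 ≤ c ∧ ∃ h ∈ 𝓗2, x = c • h}
    = {p : ℝ × ℝ | 0 < p.2} ∪ {(0, 0)} := by
  ext x
  constructor
  · rintro ⟨c, hc, h, hh, rfl⟩
    have hdisc : h.1 ^ 2 + (h.2 - 1) ^ 2 ≤ 1 := hh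
    have h2nn : 0 ≤ h.2 := by nlinarith [sq_nonneg h.1]
    rcases eq_or_lt_of_le hc with rfl | hcpos
    · right; simp; rfl
    rcases eq_or_lt_of_le h2nn with h20 | h2pos
    · have h1 : h.1 = 0 := by nlinarith [sq_nonneg h.1]
      right
      have : h = (0, 0) := Prod.ext h1 h20.symm
      simp [this]
    · left
      show 0 < (c • h).2
      simp only [Prod.smul_snd, smul_eq_mul]
      exact mul_pos hcpos h2pos
  · rintro (hp | hp)
    · set p := x
      have hp2 : 0 < p.2 := hp
      set c : ℝ := (p.1 ^ 2 + p.2 ^ 2) / (2 * p.2) with hc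
      have hcpos : 0 < c := by positivity
      refine ⟨c, le_of_lt hcpos, c⁻¹ • p, ?_, ?_⟩
      · show (c⁻¹ * p.1) ^ 2 + (c⁻¹ * p.2 - 1) ^ 2 ≤ 1
        have hc2 : 2 * p.2 * c = p.1 ^ 2 + p.2 ^ 2 := by
          rw [hc]; field_simp
        have hcne : c ≠ 0 := ne_of_gt hcpos
        have key : p.1 ^ 2 + (p.2 - c) ^ 2 ≤ c ^ 2 := by nlinarith
        have h1 : (c⁻¹ * p.1) ^ 2 + (c⁻¹ * p.2 - 1) ^ 2 = (p.1 ^ 2 + (p.2 - c) ^ 2) / c ^ 2 := by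
          field_simp
        rw [h1, div_le_one (by positivity)]
        exact key
      · rw [smul_inv_smul₀ (ne_of_gt hcpos)]
    · refine ⟨0, le_refl 0, (0, 1), ?_, ?_⟩
      · show (0:ℝ) ^ 2 + ((1:ℝ) - 1) ^ 2 ≤ 1
        norm_num
      · have : x = ((0:ℝ),(0:ℝ)) := hp
        simp [this, Prod.ext_iff]

lemma notClosed : ¬ IsClosed ({p : ℝ × ℝ | 0 < p.2} ∪ {((0:ℝ), (0:ℝ))}) := by
  intro hcl
  have htend : Tendsto (fun n : ℕ => ((1 : ℝ), (1 : ℝ) / (n + 1))) atTop (nhds (1, 0)) := by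
    apply Tendsto.prodMk_nhds tendsto_const_nhds
    exact tendsto_one_div_add_atTop_nhds_zero_nat
  have hmem : ∀ n : ℕ, ((1 : ℝ), (1 : ℝ) / (n + 1)) ∈ {p : ℝ × ℝ | 0 < p.2} ∪ {((0:ℝ), (0:ℝ))} := by
    intro n
    left
    show (0:ℝ) < 1 / (n + 1)
    positivity
  have := hcl.mem_of_tendsto htend (Eventually.of_forall hmem)
  rcases this with h | h
  · norm_num at h
  · simp at h

/-- counterexample to the constrained FTAP with a non-closed generated cone:
(a) NA(P) holds; (b) no equivalent measure `Q` with `E_Q[H·ΔS] ≤ 0` for all `H ∈ 𝓗`;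
(c) the generated cone equals `{h₂ > 0} ∪ {0}` and is not closed. -/
theorem stmt2 :
    -- (a) NA(P)
    (∀ h ∈ 𝓗2, (∀ᵐ s ∂Punif, 0 ≤ gain2 h s) → (∀ᵐ s ∂Punif, gain2 h s = 0)) ∧
    -- (b) no equivalent supermartingale-type measure
    (¬ ∃ Q : Measure ℝ, IsProbabilityMeasure Q ∧ Q ≪ Punif ∧ Punif ≪ Q ∧
      Integrable (fun s => s) Q ∧ ∀ h ∈ 𝓗2, ∫ s, gain2 h s ∂Q ≤ 0) ∧
    -- (c) the generated cone and its non-closedness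
    ({x : ℝ × ℝ | ∃ c : ℝ, 0 ≤ c ∧ ∃ h ∈ 𝓗2, x = c • h}
        = {p : ℝ × ℝ | 0 < p.2} ∪ {(0, 0)}) ∧
    ¬ IsClosed {x : ℝ × ℝ | ∃ c : ℝ, 0 ≤ c ∧ ∃ h ∈ 𝓗2, x = c • h} := by
  refine ⟨partA, partB, coneEq, ?_⟩
  rw [coneEq]
  exact notClosed
end
end

section
/- Let P be a convex set of probability measures on a Polish space Ω, ΔS : Ω → ℝ^d Borel, and C ⊆ ℝ^d a closed cone contained in N⊥(P) := span(supp_P(ΔS)). Assume NA(P): for every H ∈ C, if H·ΔS ≥ 0 P-q.s. (i.e., P-a.s. for all P ∈ P) then H·ΔS = 0 P-q.s. Then there exists a single measure P' ∈ P such that for every H ∈ C with ‖H‖ = 1, P'(H·ΔS < 0) > 0. -/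
open MeasureTheory Filter Set
open scoped RealInnerProductSpace ENNReal

noncomputable section

/-- Quasi-sure support of `ΔS` under a family `Pfam` of measures: the smallest closed set
containing `ΔS` `Pfam`-q.s. -/
def qsSupport {Ω : Type*} [MeasurableSpace Ω] {d : ℕ} (Pfam : Set (Measure Ω))
    (ΔS : Ω → EuclideanSpace ℝ (Fin d)) : Set (EuclideanSpace ℝ (Fin d)) :=
  ⋂₀ {A | IsClosed A ∧ ∀ P ∈ Pfam, ∀ᵐ ω ∂P, ΔS ω ∈ A}

/-- Stability: if `P (H·ΔS < 0) > 0` then the same holds for all `H'` near `H`. -/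
private lemma stmt6_stable {Ω : Type*} [MeasurableSpace Ω] {d : ℕ}
    (P : Measure Ω) (ΔS : Ω → EuclideanSpace ℝ (Fin d))
    (H : EuclideanSpace ℝ (Fin d)) (h : 0 < P {ω | ⟪H, ΔS ω⟫ < 0}) :
    ∃ ε > 0, ∀ H' : EuclideanSpace ℝ (Fin d), dist H' H < ε →
      0 < P {ω | ⟪H', ΔS ω⟫ < 0} := by
  set S : ℕ → Set Ω := fun n =>
    {ω | ⟪H, ΔS ω⟫ < -(1 / (n + 1)) ∧ ‖ΔS ω‖ ≤ n} with hS
  have hsub : {ω | ⟪H, ΔS ω⟫ < 0} ⊆ ⋃ n, S n := by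
    intro ω hω
    simp only [Set.mem_setOf_eq] at hω
    obtain ⟨n, hn⟩ := exists_nat_one_div_lt (show (0:ℝ) < -⟪H, ΔS ω⟫ by linarith)
    obtain ⟨m, hm⟩ := exists_nat_ge (‖ΔS ω‖)
    refine Set.mem_iUnion.2 ⟨max n m, ?_, ?_⟩
    · have h1 : (1 : ℝ) / (max n m + 1) ≤ 1 / (n + 1) := by
        apply one_div_le_one_div_of_le
        · positivity
        · have : (n:ℝ) ≤ max n m := by exact_mod_cast Nat.le_max_left n m
          linarith
      have := lt_of_le_of_lt h1 hn
      linarith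
    · have : (m:ℝ) ≤ (max n m : ℕ) := by exact_mod_cast Nat.le_max_right n m
      linarith
  have hex : ∃ n, 0 < P (S n) := by
    by_contra hc
    push_neg at hc
    have hall : ∀ n, P (S n) = 0 := fun n => le_antisymm (hc n) zero_le
    have : P {ω | ⟪H, ΔS ω⟫ < 0} = 0 := by
      refine le_antisymm ?_ zero_le
      calc P {ω | ⟪H, ΔS ω⟫ < 0} ≤ P (⋃ n, S n) := measure_mono hsub
        _ ≤ ∑' n, P (S n) := measure_iUnion_le S
        _ = 0 := by simp [hall]
    exact absurd this h.ne'
  obtain ⟨n, hn⟩ := hex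
  refine ⟨1 / ((n + 1) ^ 2), by positivity, fun H' hH' => ?_⟩
  have hsub2 : S n ⊆ {ω | ⟪H', ΔS ω⟫ < 0} := by
    intro ω hω
    obtain ⟨h1, h2⟩ := hω
    simp only [Set.mem_setOf_eq]
    have hdec : ⟪H', ΔS ω⟫ = ⟪H, ΔS ω⟫ + ⟪H' - H, ΔS ω⟫ := by
      rw [← inner_add_left, add_sub_cancel]
    have hcs : ⟪H' - H, ΔS ω⟫ ≤ ‖H' - H‖ * ‖ΔS ω‖ := real_inner_le_norm _ _
    have hdist : ‖H' - H‖ < 1 / ((n + 1) ^ 2) := by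
      rwa [dist_eq_norm] at hH'
    have hnn : (0:ℝ) ≤ ‖ΔS ω‖ := norm_nonneg _
    have hprod : ‖H' - H‖ * ‖ΔS ω‖ ≤ (1 / ((n + 1) ^ 2)) * n :=
      mul_le_mul hdist.le h2 hnn (by positivity)
    have harith : (1 / (((n:ℝ) + 1) ^ 2)) * n < 1 / (n + 1) := by
      rw [div_mul_eq_mul_div, one_mul, div_lt_div_iff₀ (by positivity) (by positivity)]
      nlinarith [Nat.cast_nonneg (α := ℝ) n]
    rw [hdec]
    linarith
  exact lt_of_lt_of_le hn (measure_mono hsub2)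

/-- Convex combination of finitely many members of `Pfam` dominating each of them. -/
private lemma stmt6_combo {Ω : Type*} [MeasurableSpace Ω] (Pfam : Set (Measure Ω))
    (hconvex : ∀ P ∈ Pfam, ∀ P' ∈ Pfam, ∀ a b : ℝ≥0∞, a + b = 1 → a • P + b • P' ∈ Pfam)
    {ι : Type*} (Pi : ι → Measure Ω) (t : Finset ι) (ht : t.Nonempty)
    (hmem : ∀ i ∈ t, Pi i ∈ Pfam) :
    ∃ Q ∈ Pfam, ∀ i ∈ t, ∀ s : Set Ω, 0 < Pi i s → 0 < Q s := by
  classical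
  induction t using Finset.induction_on with
  | empty => exact absurd ht (by simp)
  | @insert a t ha ih =>
    rcases t.eq_empty_or_nonempty with rfl | htne
    · exact ⟨Pi a, hmem a (by simp), by simp⟩
    · obtain ⟨Q, hQ, hQpos⟩ := ih htne (fun i hi => hmem i (Finset.mem_insert_of_mem hi))
      refine ⟨(2⁻¹ : ℝ≥0∞) • Q + (2⁻¹ : ℝ≥0∞) • Pi a,
        hconvex Q hQ (Pi a) (hmem a (Finset.mem_insert_self a t)) _ _
          ENNReal.inv_two_add_inv_two, fun i hi s hs => ?_⟩
      have happ : ((2⁻¹ : ℝ≥0∞) • Q + (2⁻¹ : ℝ≥0∞) • Pi a) s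
          = 2⁻¹ * Q s + 2⁻¹ * Pi a s := by
        simp [Measure.add_apply, Measure.smul_apply, smul_eq_mul]
      rw [happ]
      rcases Finset.mem_insert.1 hi with rfl | hit
      · have : 0 < 2⁻¹ * Pi i s :=
          ENNReal.mul_pos (by simp) hs.ne'
        exact lt_of_lt_of_le this le_add_self
      · have : 0 < 2⁻¹ * Q s :=
          ENNReal.mul_pos (by simp) (hQpos i hit s hs).ne'
        exact lt_of_lt_of_le this le_self_add

/-- finite covering step. Under NA(Pfam) for a closed cone `C` contained in
`N⊥(Pfam)`, there is a single `P' ∈ Pfam` witnessing `P'(H·ΔS < 0) > 0` for all unit `H ∈ C`. -/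
theorem stmt6 {Ω : Type*} [TopologicalSpace Ω] [PolishSpace Ω] [MeasurableSpace Ω] [BorelSpace Ω]
    {d : ℕ} (Pfam : Set (Measure Ω)) (hne : Pfam.Nonempty)
    (hprob : ∀ P ∈ Pfam, IsProbabilityMeasure P)
    (hconvex : ∀ P ∈ Pfam, ∀ P' ∈ Pfam, ∀ a b : ℝ≥0∞, a + b = 1 → a • P + b • P' ∈ Pfam)
    (ΔS : Ω → EuclideanSpace ℝ (Fin d)) (hmeas : Measurable ΔS)
    (C : Set (EuclideanSpace ℝ (Fin d))) (hCclosed : IsClosed C)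
    (hCcone : ∀ (c : ℝ), 0 ≤ c → ∀ x ∈ C, c • x ∈ C)
    (hCsub : C ⊆ (Submodule.span ℝ (qsSupport Pfam ΔS) : Set (EuclideanSpace ℝ (Fin d))))
    (hNA : ∀ H ∈ C, (∀ P ∈ Pfam, ∀ᵐ ω ∂P, 0 ≤ ⟪H, ΔS ω⟫) →
      (∀ P ∈ Pfam, ∀ᵐ ω ∂P, ⟪H, ΔS ω⟫ = 0)) :
    ∃ P' ∈ Pfam, ∀ H ∈ C, ‖H‖ = 1 → 0 < P' {ω | ⟪H, ΔS ω⟫ < 0} := by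
  classical
  set K : Set (EuclideanSpace ℝ (Fin d)) := C ∩ Metric.sphere 0 1 with hKdef
  -- Step 1: for each unit H ∈ C there is a witness measure.
  have hP : ∀ H ∈ C, ‖H‖ = 1 → ∃ P ∈ Pfam, 0 < P {ω | ⟪H, ΔS ω⟫ < 0} := by
    intro H hHC hHnorm
    by_contra hc
    push_neg at hc
    have hzero : ∀ P ∈ Pfam, P {ω | ⟪H, ΔS ω⟫ < 0} = 0 := fun P hPm =>
      le_antisymm (hc P hPm) zero_le
    have hge : ∀ P ∈ Pfam, ∀ᵐ ω ∂P, 0 ≤ ⟪H, ΔS ω⟫ := by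
      intro P hPm
      rw [ae_iff]
      convert hzero P hPm using 2
      ext ω; simp [not_le]
    have heq := hNA H hHC hge
    have hsupp : qsSupport Pfam ΔS ⊆ ((ℝ ∙ H)ᗮ : Submodule ℝ (EuclideanSpace ℝ (Fin d))) := by
      apply Set.sInter_subset_of_mem
      refine ⟨Submodule.closed_of_finiteDimensional _, fun P hPm => ?_⟩
      filter_upwards [heq P hPm] with ω hω
      rw [SetLike.mem_coe, Submodule.mem_orthogonal_singleton_iff_inner_right]
      exact hω
    have hspan : Submodule.span ℝ (qsSupport Pfam ΔS) ≤ (ℝ ∙ H)ᗮ :=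
      Submodule.span_le.2 hsupp
    have hHmem : H ∈ (ℝ ∙ H)ᗮ := hspan (hCsub hHC)
    have : ⟪H, H⟫ = 0 :=
      Submodule.mem_orthogonal_singleton_iff_inner_right.1 hHmem
    rw [real_inner_self_eq_norm_sq, hHnorm] at this
    norm_num at this
  -- Step 2: choose witnesses and stability radii.
  have hP' : ∀ H : K, ∃ P ∈ Pfam, ∃ ε > 0, ∀ H' : EuclideanSpace ℝ (Fin d),
      dist H' (H : EuclideanSpace ℝ (Fin d)) < ε → 0 < P {ω | ⟪H', ΔS ω⟫ < 0} := by
    rintro ⟨H, hHC, hHS⟩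
    have hHnorm : ‖H‖ = 1 := by simpa using mem_sphere_zero_iff_norm.1 hHS
    obtain ⟨P, hPm, hPpos⟩ := hP H hHC hHnorm
    obtain ⟨ε, hε, hball⟩ := stmt6_stable P ΔS H hPpos
    exact ⟨P, hPm, ε, hε, hball⟩
  choose Pm hPmem ε hε hball using hP'
  -- Step 3: compactness of K and finite subcover.
  have hKcompact : IsCompact K :=
    (isCompact_sphere (0 : EuclideanSpace ℝ (Fin d)) 1).of_isClosed_subset
      (hCclosed.inter Metric.isClosed_sphere) Set.inter_subset_right
  have hcover : K ⊆ ⋃ i : K, Metric.ball (i : EuclideanSpace ℝ (Fin d)) (ε i) := by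
    intro x hx
    exact Set.mem_iUnion.2 ⟨⟨x, hx⟩, by simpa using hε ⟨x, hx⟩⟩
  obtain ⟨t, htcov⟩ := hKcompact.elim_finite_subcover
    (fun i : K => Metric.ball (i : EuclideanSpace ℝ (Fin d)) (ε i))
    (fun i => Metric.isOpen_ball) hcover
  rcases K.eq_empty_or_nonempty with hKe | hKne
  · obtain ⟨P, hPm⟩ := hne
    refine ⟨P, hPm, fun H hHC hHnorm => ?_⟩
    exact absurd (show H ∈ K from ⟨hHC, by simp [hHnorm, mem_sphere_zero_iff_norm]⟩)
      (by simp [hKe])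
  · -- t is nonempty since K is nonempty and covered.
    obtain ⟨x, hx⟩ := hKne
    have htne : t.Nonempty := by
      rcases Set.mem_iUnion₂.1 (htcov hx) with ⟨i, hi, _⟩
      exact ⟨i, hi⟩
    obtain ⟨Q, hQ, hQpos⟩ := stmt6_combo Pfam hconvex Pm t htne (fun i _ => hPmem i)
    refine ⟨Q, hQ, fun H hHC hHnorm => ?_⟩
    have hHK : H ∈ K := ⟨hHC, by simp [hHnorm, mem_sphere_zero_iff_norm]⟩
    rcases Set.mem_iUnion₂.1 (htcov hHK) with ⟨i, hi, hball'⟩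
    exact hQpos i hi _ (hball i H (Metric.mem_ball.1 hball'))
end
end

section
/- Let P be a convex set of probability measures on a Polish space, ΔS : Ω → ℝ^d Borel, and let P' ∈ P. If N⊥(P') := span(supp_{P'}(ΔS)) is a proper subspace of N⊥(P) := span(supp_P(ΔS)), then there exist R ∈ P with P' ≪ R and N⊥(R) strictly larger than N⊥(P'). Consequently, iterating, there exists P'' ∈ P with P' ≪ P'' and N⊥(P'') = N⊥(P). -/
open MeasureTheory Set
open scoped RealInnerProductSpace ENNReal

noncomputable section

/-- `N⊥(Q)` for a single measure `Q`: the span of the support of the law of `ΔS` under `Q`. -/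
def NperpOne {Ω : Type*} [MeasurableSpace Ω] {d : ℕ} (Q : Measure Ω)
    (ΔS : Ω → EuclideanSpace ℝ (Fin d)) : Submodule ℝ (EuclideanSpace ℝ (Fin d)) :=
  Submodule.span ℝ (qsSupport {Q} ΔS)

/-- Almost surely, `ΔS` lands in the quasi-sure support of the singleton family. -/
lemma ae_mem_qsSupport {Ω : Type*} [MeasurableSpace Ω] {d : ℕ} (Q : Measure Ω)
    (ΔS : Ω → EuclideanSpace ℝ (Fin d)) :
    ∀ᵐ ω ∂Q, ΔS ω ∈ qsSupport {Q} ΔS := by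
  rw [ae_iff]
  have hset : {ω | ¬ ΔS ω ∈ qsSupport {Q} ΔS} = ΔS ⁻¹' (qsSupport {Q} ΔS)ᶜ := rfl
  rw [hset]
  unfold qsSupport
  rw [Set.compl_sInter]
  obtain ⟨T, hTc, hTsub, hTU⟩ := TopologicalSpace.isOpen_sUnion_countable
    (compl '' {A | IsClosed A ∧ ∀ P ∈ ({Q} : Set (Measure Ω)), ∀ᵐ ω ∂P, ΔS ω ∈ A})
    (by rintro t ⟨A, ⟨hA, _⟩, rfl⟩; exact hA.isOpen_compl)
  rw [← hTU, Set.preimage_sUnion]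
  refine (measure_biUnion_null_iff hTc).mpr ?_
  intro t ht
  obtain ⟨A, ⟨hAc, hAae⟩, rfl⟩ := hTsub ht
  have h := hAae Q (mem_singleton _)
  rw [ae_iff] at h
  exact h

/-- Monotonicity of the quasi-sure support under absolute continuity. -/
lemma qsSupport_mono_ac {Ω : Type*} [MeasurableSpace Ω] {d : ℕ} {P R : Measure Ω}
    (h : P ≪ R) (ΔS : Ω → EuclideanSpace ℝ (Fin d)) :
    qsSupport {P} ΔS ⊆ qsSupport {R} ΔS := by
  intro x hx A hA
  refine hx A ⟨hA.1, ?_⟩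
  rintro Q rfl
  exact (hA.2 R (mem_singleton _)).filter_mono h.ae_le

/-- The quasi-sure support of an element is contained in that of the family. -/
lemma qsSupport_singleton_subset {Ω : Type*} [MeasurableSpace Ω] {d : ℕ}
    {Pfam : Set (Measure Ω)} {Q : Measure Ω} (hQ : Q ∈ Pfam)
    (ΔS : Ω → EuclideanSpace ℝ (Fin d)) :
    qsSupport {Q} ΔS ⊆ qsSupport Pfam ΔS := by
  intro x hx A hA
  refine hx A ⟨hA.1, ?_⟩
  intro P hP
  rw [mem_singleton_iff.mp hP]
  exact hA.2 Q hQ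

/-- One enlargement step. -/
lemma stmt8_step {Ω : Type*} [MeasurableSpace Ω] {d : ℕ}
    (Pfam : Set (Measure Ω))
    (hconvex : ∀ P ∈ Pfam, ∀ P'' ∈ Pfam, ∀ a b : ℝ≥0∞, a + b = 1 → a • P + b • P'' ∈ Pfam)
    (ΔS : Ω → EuclideanSpace ℝ (Fin d))
    (P' : Measure Ω) (hP' : P' ∈ Pfam)
    (hproper : NperpOne P' ΔS < Submodule.span ℝ (qsSupport Pfam ΔS)) :
    ∃ R ∈ Pfam, P' ≪ R ∧ NperpOne P' ΔS < NperpOne R ΔS := by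
  set N := NperpOne P' ΔS with hN
  have hNc : IsClosed (N : Set (EuclideanSpace ℝ (Fin d))) :=
    Submodule.closed_of_finiteDimensional N
  have hexists : ∃ R₁ ∈ Pfam, R₁ {ω | ¬ ΔS ω ∈ (N : Set (EuclideanSpace ℝ (Fin d)))} ≠ 0 := by
    by_contra hcon
    push_neg at hcon
    have hmem : qsSupport Pfam ΔS ⊆ (N : Set (EuclideanSpace ℝ (Fin d))) :=
      sInter_subset_of_mem ⟨hNc, fun P hP => ae_iff.mpr (hcon P hP)⟩
    exact hproper.not_ge (Submodule.span_le.mpr hmem)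
  obtain ⟨R₁, hR₁mem, hR₁⟩ := hexists
  set R : Measure Ω := (2⁻¹ : ℝ≥0∞) • P' + (2⁻¹ : ℝ≥0∞) • R₁ with hRdef
  have hRapp : ∀ s : Set Ω, R s = 2⁻¹ * P' s + 2⁻¹ * R₁ s := by
    intro s
    simp [hRdef, Measure.add_apply, Measure.smul_apply, smul_eq_mul]
  have hRmem : R ∈ Pfam :=
    hconvex P' hP' R₁ hR₁mem _ _ ENNReal.inv_two_add_inv_two
  have hac : P' ≪ R := by
    intro s hs
    rw [hRapp s] at hs
    rcases add_eq_zero.mp hs with ⟨h1, _⟩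
    rcases mul_eq_zero.mp h1 with h | h
    · exact absurd h (by simp)
    · exact h
  have hle : N ≤ NperpOne R ΔS := Submodule.span_mono (qsSupport_mono_ac hac ΔS)
  refine ⟨R, hRmem, hac, lt_of_le_of_ne hle ?_⟩
  intro heq
  have hsub : qsSupport {R} ΔS ⊆ (N : Set (EuclideanSpace ℝ (Fin d))) := by
    intro x hx
    rw [heq]
    exact Submodule.subset_span hx
  have hae : ∀ᵐ ω ∂ R, ΔS ω ∈ (N : Set (EuclideanSpace ℝ (Fin d))) :=
    (ae_mem_qsSupport R ΔS).mono fun ω h => hsub h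
  have h0 : R {ω | ¬ ΔS ω ∈ (N : Set (EuclideanSpace ℝ (Fin d)))} = 0 := ae_iff.mp hae
  rw [hRapp] at h0
  rcases add_eq_zero.mp h0 with ⟨_, h2⟩
  rcases mul_eq_zero.mp h2 with h | h
  · exact absurd h (by simp)
  · exact hR₁ h

/-- Iteration of the enlargement step. -/
lemma stmt8_reach {Ω : Type*} [MeasurableSpace Ω] {d : ℕ}
    (Pfam : Set (Measure Ω))
    (hconvex : ∀ P ∈ Pfam, ∀ P'' ∈ Pfam, ∀ a b : ℝ≥0∞, a + b = 1 → a • P + b • P'' ∈ Pfam)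
    (ΔS : Ω → EuclideanSpace ℝ (Fin d)) :
    ∀ n : ℕ, ∀ P' : Measure Ω, P' ∈ Pfam →
      Module.finrank ℝ (Submodule.span ℝ (qsSupport Pfam ΔS)) ≤
        Module.finrank ℝ (NperpOne P' ΔS) + n →
      ∃ P'' ∈ Pfam, P' ≪ P'' ∧ NperpOne P'' ΔS = Submodule.span ℝ (qsSupport Pfam ΔS) := by
  intro n
  induction n with
  | zero =>
    intro P' hP' hrank
    have hle : NperpOne P' ΔS ≤ Submodule.span ℝ (qsSupport Pfam ΔS) :=
      Submodule.span_mono (qsSupport_singleton_subset hP' ΔS)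
    exact ⟨P', hP', Measure.AbsolutelyContinuous.rfl,
      Submodule.eq_of_le_of_finrank_le hle (by simpa using hrank)⟩
  | succ n ih =>
    intro P' hP' hrank
    have hle : NperpOne P' ΔS ≤ Submodule.span ℝ (qsSupport Pfam ΔS) :=
      Submodule.span_mono (qsSupport_singleton_subset hP' ΔS)
    by_cases heq : NperpOne P' ΔS = Submodule.span ℝ (qsSupport Pfam ΔS)
    · exact ⟨P', hP', Measure.AbsolutelyContinuous.rfl, heq⟩
    · have hlt : NperpOne P' ΔS < Submodule.span ℝ (qsSupport Pfam ΔS) :=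
        lt_of_le_of_ne hle heq
      obtain ⟨R, hRmem, hacR, hltR⟩ := stmt8_step Pfam hconvex ΔS P' hP' hlt
      have hfr : Module.finrank ℝ (NperpOne P' ΔS) < Module.finrank ℝ (NperpOne R ΔS) :=
        Submodule.finrank_lt_finrank_of_lt hltR
      obtain ⟨P'', h1, h2, h3⟩ := ih R hRmem (by omega)
      exact ⟨P'', h1, hacR.trans h2, h3⟩

/-- if `N⊥(P')` is a proper subspace of `N⊥(𝒫)`, then one can strictly enlarge it
by a dominating measure in the convex family, and by iterating reach `P'' ∈ 𝒫` with
`P' ≪ P''` and `N⊥(P'') = N⊥(𝒫)`. -/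
theorem stmt8 {Ω : Type*} [TopologicalSpace Ω] [PolishSpace Ω] [MeasurableSpace Ω] [BorelSpace Ω]
    {d : ℕ} (Pfam : Set (Measure Ω))
    (hprob : ∀ P ∈ Pfam, IsProbabilityMeasure P)
    (hconvex : ∀ P ∈ Pfam, ∀ P'' ∈ Pfam, ∀ a b : ℝ≥0∞, a + b = 1 → a • P + b • P'' ∈ Pfam)
    (ΔS : Ω → EuclideanSpace ℝ (Fin d)) (hmeas : Measurable ΔS)
    (P' : Measure Ω) (hP' : P' ∈ Pfam)
    (hproper : NperpOne P' ΔS < Submodule.span ℝ (qsSupport Pfam ΔS)) :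
    (∃ R ∈ Pfam, P' ≪ R ∧ NperpOne P' ΔS < NperpOne R ΔS) ∧
    (∃ P'' ∈ Pfam, P' ≪ P'' ∧ NperpOne P'' ΔS = Submodule.span ℝ (qsSupport Pfam ΔS)) := by
  refine ⟨stmt8_step Pfam hconvex ΔS P' hP' hproper, ?_⟩
  exact stmt8_reach Pfam hconvex ΔS
    (Module.finrank ℝ (Submodule.span ℝ (qsSupport Pfam ΔS))) P' hP' (Nat.le_add_left _ _)
end
end

section
/- Let X and Y be Borel spaces (Polish), S : X × Y → ℝ^d Borel, and 𝔥 : X ⇉ ℝ^d a set-valued map with nonempty compact values that is measurable (i.e., {x : 𝔥(x) ∩ A ≠ ∅} is Borel for every closed A ⊆ ℝ^d). Then the map φ : {(x,Q) ∈ X × 𝔓(Y) : E_Q|S(x,·)| < ∞} → ℝ given by φ(x,Q) = sup_{y ∈ 𝔥(x)} y·E_Q[S(x,·)] is Borel measurable, where 𝔓(Y) carries the topology of weak convergence. -/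
open MeasureTheory Set
open scoped RealInnerProductSpace ENNReal

noncomputable section

open Filter Topology
namespace Stmt14Aux



variable {Y : Type*} [TopologicalSpace Y] [PolishSpace Y] [MeasurableSpace Y] [BorelSpace Y]

lemma measurable_toMeasure :
    Measurable[borel (ProbabilityMeasure Y)]
      (fun Q : ProbabilityMeasure Y => (Q : Measure Y)) := by
  letI := TopologicalSpace.upgradeIsCompletelyMetrizable Y
  letI : MeasurableSpace (ProbabilityMeasure Y) := borel _
  haveI : BorelSpace (ProbabilityMeasure Y) := ⟨rfl⟩
  apply Measure.measurable_of_measurable_coe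
  have key : ∀ ⦃s : Set Y⦄, MeasurableSet s →
      Measurable (fun Q : ProbabilityMeasure Y => (Q : Measure Y) s) := by
    refine MeasurableSpace.induction_on_inter BorelSpace.measurable_eq isPiSystem_isOpen
      ?_ ?_ ?_ ?_
    · simp only [measure_empty]; exact measurable_const
    · intro G hG
      have lsc : LowerSemicontinuous (fun Q : ProbabilityMeasure Y => (Q : Measure Y) G) := by
        intro Q c hc
        have hli := ProbabilityMeasure.le_liminf_measure_open_of_tendsto
          (μs := fun Q' : ProbabilityMeasure Y => Q') (tendsto_id (x := 𝓝 Q)) hG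
        exact Filter.eventually_lt_of_lt_liminf (lt_of_lt_of_le hc hli)
      exact lsc.measurable
    · intro t ht hmt
      have : (fun Q : ProbabilityMeasure Y => (Q : Measure Y) tᶜ)
          = fun Q : ProbabilityMeasure Y => 1 - (Q : Measure Y) t := by
        funext Q
        rw [measure_compl ht (measure_ne_top _ _), measure_univ]
      rw [this]
      exact measurable_const.sub hmt
    · intro f hd hm hfm
      have : (fun Q : ProbabilityMeasure Y => (Q : Measure Y) (⋃ i, f i))
          = fun Q : ProbabilityMeasure Y => ∑' i, (Q : Measure Y) (f i) := by
        funext Q; exact measure_iUnion hd hm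
      rw [this]
      exact Measurable.ennreal_tsum hfm
  exact fun s hs => key hs



variable {X : Type*} [MeasurableSpace X] {d : ℕ}

lemma sf_meas (𝔥 : X → Set (EuclideanSpace ℝ (Fin d)))
    (hne : ∀ x, (𝔥 x).Nonempty) (hcpt : ∀ x, IsCompact (𝔥 x))
    (hmeas : ∀ A : Set (EuclideanSpace ℝ (Fin d)), IsClosed A →
      MeasurableSet {x | (𝔥 x ∩ A).Nonempty}) :
    StronglyMeasurable (Function.uncurry
      (fun (v : EuclideanSpace ℝ (Fin d)) (x : X) =>
        sSup ((fun w => ⟪w, v⟫) '' 𝔥 x))) := by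
  have hcont : ∀ v : EuclideanSpace ℝ (Fin d),
      Continuous (fun w : EuclideanSpace ℝ (Fin d) => ⟪w, v⟫) :=
    fun v => continuous_id.inner continuous_const
  have hbdd : ∀ x v, BddAbove ((fun w => ⟪w, v⟫) '' 𝔥 x) :=
    fun x v => (((hcpt x).image (hcont v)).bddAbove)
  apply stronglyMeasurable_uncurry_of_continuous_of_stronglyMeasurable
  · -- continuity in v for each fixed x
    intro x
    obtain ⟨R, hR⟩ := (hcpt x).isBounded.exists_norm_le
    have hle : ∀ v v' : EuclideanSpace ℝ (Fin d),
        sSup ((fun w => ⟪w, v⟫) '' 𝔥 x)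
          ≤ sSup ((fun w => ⟪w, v'⟫) '' 𝔥 x) + (max R 0) * dist v v' := by
      intro v v'
      refine csSup_le ((hne x).image _) ?_
      rintro r ⟨w, hw, rfl⟩
      have h1 : ⟪w, v⟫ = ⟪w, v'⟫ + ⟪w, v - v'⟫ := by
        rw [inner_sub_right]; ring
      have h2 : ⟪w, v'⟫ ≤ sSup ((fun w => ⟪w, v'⟫) '' 𝔥 x) :=
        le_csSup (hbdd x v') (mem_image_of_mem _ hw)
      have h3 : ⟪w, v - v'⟫ ≤ max R 0 * dist v v' := by
        calc ⟪w, v - v'⟫ ≤ ‖w‖ * ‖v - v'‖ := real_inner_le_norm _ _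
        _ ≤ max R 0 * dist v v' := by
            rw [dist_eq_norm]
            exact mul_le_mul_of_nonneg_right ((hR w hw).trans (le_max_left _ _)) (norm_nonneg _)
      show ⟪w, v⟫ ≤ _
      rw [h1]; exact add_le_add h2 h3
    have : LipschitzWith (max R 0).toNNReal
        (fun v : EuclideanSpace ℝ (Fin d) => sSup ((fun w => ⟪w, v⟫) '' 𝔥 x)) := by
      apply LipschitzWith.of_dist_le_mul
      intro v v'
      rw [Real.dist_eq, abs_sub_le_iff]
      have hc : ((max R 0).toNNReal : ℝ) = max R 0 := Real.coe_toNNReal _ (le_max_right _ _)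
      constructor
      · rw [hc]; linarith [hle v v']
      · rw [hc, dist_comm v v']; linarith [hle v' v]
    exact this.continuous
  · -- measurability in x for each fixed v
    intro v
    apply Measurable.stronglyMeasurable
    apply measurable_of_Ici
    intro c
    have : (fun x : X => sSup ((fun w => ⟪w, v⟫) '' 𝔥 x)) ⁻¹' Ici c
        = {x | (𝔥 x ∩ {w | c ≤ ⟪w, v⟫}).Nonempty} := by
      ext x
      simp only [mem_preimage, mem_Ici, mem_setOf_eq]
      constructor
      · intro hc
        have hmem : sSup ((fun w => ⟪w, v⟫) '' 𝔥 x) ∈ (fun w => ⟪w, v⟫) '' 𝔥 x :=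
          ((hcpt x).image (hcont v)).sSup_mem ((hne x).image _)
        obtain ⟨w, hw, hweq⟩ := hmem
        exact ⟨w, hw, by simp only [mem_setOf_eq]; rw [show ⟪w,v⟫ = _ from hweq]; exact hc⟩
      · rintro ⟨w, hw, hwc⟩
        exact le_trans hwc (le_csSup (hbdd x v) (mem_image_of_mem _ hw))
    rw [this]
    exact hmeas _ (isClosed_le continuous_const (hcont v))

end Stmt14Aux

/-- Proposition 3.1: for a measurable compact-valued nonempty correspondence
`𝔥`, the constrained support function `φ(x,Q) = sup_{y ∈ 𝔥(x)} y·E_Q[S(x,·)]` is Borel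
measurable on `{(x,Q) : E_Q|S(x,·)| < ∞}`, where the space of probability measures carries
the Borel σ-algebra of the topology of weak convergence. -/
theorem stmt14 {X Y : Type*}
    [TopologicalSpace X] [PolishSpace X] [MeasurableSpace X] [BorelSpace X]
    [TopologicalSpace Y] [PolishSpace Y] [MeasurableSpace Y] [BorelSpace Y]
    {d : ℕ} (S : X → Y → EuclideanSpace ℝ (Fin d))
    (hS : Measurable (Function.uncurry S))
    (𝔥 : X → Set (EuclideanSpace ℝ (Fin d)))
    (hne : ∀ x, (𝔥 x).Nonempty) (hcpt : ∀ x, IsCompact (𝔥 x))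
    (hmeas : ∀ A : Set (EuclideanSpace ℝ (Fin d)), IsClosed A →
      MeasurableSet {x | (𝔥 x ∩ A).Nonempty}) :
    ∀ B : Set ℝ, MeasurableSet B →
      MeasurableSet[@Prod.instMeasurableSpace X (ProbabilityMeasure Y) _
          (borel (ProbabilityMeasure Y))]
        {p : X × ProbabilityMeasure Y |
          Integrable (fun y => ‖S p.1 y‖) (p.2 : Measure Y) ∧
          sSup {r : ℝ | ∃ v ∈ 𝔥 p.1, r = ⟪v, ∫ y, S p.1 y ∂(p.2 : Measure Y)⟫} ∈ B} := by

  intro B hB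
  letI : MeasurableSpace (ProbabilityMeasure Y) := borel _
  haveI : BorelSpace (ProbabilityMeasure Y) := ⟨rfl⟩
  -- the kernel sending (x, Q) to Q
  set κ : ProbabilityTheory.Kernel (X × ProbabilityMeasure Y) Y :=
    ⟨fun p => (p.2 : Measure Y), Stmt14Aux.measurable_toMeasure.comp measurable_snd⟩ with hκ
  haveI : ProbabilityTheory.IsMarkovKernel κ := ⟨fun p => by simp [hκ]; infer_instance⟩
  -- measurability of the vector integral
  have hSm : StronglyMeasurable
      (fun q : (X × ProbabilityMeasure Y) × Y => S q.1.1 q.2) := by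
    exact (hS.comp ((measurable_fst.fst).prodMk measurable_snd)).stronglyMeasurable
  have hg : StronglyMeasurable
      (fun p : X × ProbabilityMeasure Y => ∫ y, S p.1 y ∂(p.2 : Measure Y)) := by
    have := hSm.integral_kernel_prod_right' (κ := κ)
    simpa [hκ] using this
  -- measurability of the integrability condition
  have hlin : Measurable (fun p : X × ProbabilityMeasure Y =>
      ∫⁻ y, (‖S p.1 y‖₊ : ℝ≥0∞) ∂(p.2 : Measure Y)) := by
    have hf : Measurable (fun q : (X × ProbabilityMeasure Y) × Y => (‖S q.1.1 q.2‖₊ : ℝ≥0∞)) :=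
      (hS.comp ((measurable_fst.fst).prodMk measurable_snd)).nnnorm.coe_nnreal_ennreal
    have := hf.lintegral_kernel_prod_right' (κ := κ)
    simpa [hκ] using this
  have hIset : {p : X × ProbabilityMeasure Y |
      Integrable (fun y => ‖S p.1 y‖) (p.2 : Measure Y)}
      = (fun p : X × ProbabilityMeasure Y =>
          ∫⁻ y, (‖S p.1 y‖₊ : ℝ≥0∞) ∂(p.2 : Measure Y)) ⁻¹' (Iio ∞) := by
    ext p
    simp only [mem_setOf_eq, mem_preimage, mem_Iio]
    rw [Integrable, and_iff_right]
    · simp [HasFiniteIntegral, enorm_eq_nnnorm]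
    · exact ((hS.comp (measurable_const.prodMk measurable_id)).norm).aestronglyMeasurable
  -- the support function
  have hsf := Stmt14Aux.sf_meas 𝔥 hne hcpt hmeas
  have hφ : Measurable (fun p : X × ProbabilityMeasure Y =>
      sSup ((fun w => ⟪w, ∫ y, S p.1 y ∂(p.2 : Measure Y)⟫) '' 𝔥 p.1)) := by
    have : (fun p : X × ProbabilityMeasure Y =>
        sSup ((fun w => ⟪w, ∫ y, S p.1 y ∂(p.2 : Measure Y)⟫) '' 𝔥 p.1))
        = (Function.uncurry (fun (v : EuclideanSpace ℝ (Fin d)) (x : X) =>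
            sSup ((fun w => ⟪w, v⟫) '' 𝔥 x)))
          ∘ (fun p => (∫ y, S p.1 y ∂(p.2 : Measure Y), p.1)) := rfl
    rw [this]
    exact hsf.measurable.comp (hg.measurable.prodMk measurable_fst)
  have hsets : ∀ p : X × ProbabilityMeasure Y,
      {r : ℝ | ∃ v ∈ 𝔥 p.1, r = ⟪v, ∫ y, S p.1 y ∂(p.2 : Measure Y)⟫}
      = (fun w => ⟪w, ∫ y, S p.1 y ∂(p.2 : Measure Y)⟫) '' 𝔥 p.1 := by
    intro p
    ext r
    simp only [mem_setOf_eq, mem_image]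
    constructor
    · rintro ⟨v, hv, rfl⟩; exact ⟨v, hv, rfl⟩
    · rintro ⟨v, hv, rfl⟩; exact ⟨v, hv, rfl⟩
  have : {p : X × ProbabilityMeasure Y |
      Integrable (fun y => ‖S p.1 y‖) (p.2 : Measure Y) ∧
      sSup {r : ℝ | ∃ v ∈ 𝔥 p.1, r = ⟪v, ∫ y, S p.1 y ∂(p.2 : Measure Y)⟫} ∈ B}
      = {p : X × ProbabilityMeasure Y |
          Integrable (fun y => ‖S p.1 y‖) (p.2 : Measure Y)}
        ∩ (fun p : X × ProbabilityMeasure Y =>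
            sSup ((fun w => ⟪w, ∫ y, S p.1 y ∂(p.2 : Measure Y)⟫) '' 𝔥 p.1)) ⁻¹' B := by
    ext p
    simp only [mem_setOf_eq, mem_inter_iff, mem_preimage, hsets p]
  rw [this, hIset]
  exact (hlin measurableSet_Iio).inter (hφ hB)
end
end

section
/- Let X be a Polish space, S : X × Ω → ℝ^d Borel (Ω Polish), and 𝔥 : X ⇉ ℝ^d a set-valued map with Borel graph such that there is a countable set (y_n) ⊆ ℝ^d with: for every x and every y ∈ 𝔥(x) there is a subsequence of (y_n) contained in 𝔥(x) converging to y. Then (x,Q) ↦ sup_{y ∈ 𝔥(x)} y·E_Q[S(x,·)] is Borel measurable on {(x,Q) : E_Q|S(x,·)| < ∞}, being equal to sup_n φ(y_n, x, Q) where φ(y,x,Q) = y·E_Q[S(x,·)] if y ∈ 𝔥(x) and −∞ otherwise. -/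
open MeasureTheory Set
open scoped RealInnerProductSpace ENNReal NNReal

noncomputable section
open scoped Classical

/-- Evaluation of probability measures at Borel sets is Borel measurable for the weak topology. -/
lemma aux_toMeasure_measurable {Y : Type*}
    [TopologicalSpace Y] [PolishSpace Y] [MeasurableSpace Y] [BorelSpace Y] :
    Measurable[borel (ProbabilityMeasure Y)]
      (fun μ : ProbabilityMeasure Y => (μ : Measure Y)) := by
  letI : MeasurableSpace (ProbabilityMeasure Y) := borel (ProbabilityMeasure Y)
  haveI : BorelSpace (ProbabilityMeasure Y) := ⟨rfl⟩
  apply Measure.measurable_of_measurable_coe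
  intro s hs
  have hgen : (inferInstance : MeasurableSpace Y)
      = MeasurableSpace.generateFrom {t : Set Y | IsClosed t} := by
    rw [BorelSpace.measurable_eq (α := Y), borel_eq_generateFrom_isClosed]
  have cont : ∀ f : BoundedContinuousFunction Y ℝ≥0,
      Continuous fun μ : ProbabilityMeasure Y => ∫⁻ x, (f x : ℝ≥0∞) ∂(μ : Measure Y) := by
    intro f
    have hrw : (fun μ : ProbabilityMeasure Y => ∫⁻ x, (f x : ℝ≥0∞) ∂(μ : Measure Y))
        = fun μ : ProbabilityMeasure Y =>
          ((μ.toFiniteMeasure.testAgainstNN f : ℝ≥0) : ℝ≥0∞) := by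
      funext μ
      rw [FiniteMeasure.testAgainstNN_coe_eq]
      rfl
    rw [hrw]
    exact ENNReal.continuous_coe.comp (ProbabilityMeasure.continuous_testAgainstNN_eval f)
  refine MeasurableSpace.induction_on_inter
    (C := fun s _ => Measurable fun μ : ProbabilityMeasure Y => (μ : Measure Y) s)
    hgen isPiSystem_isClosed ?_ ?_ ?_ ?_ _ hs
  · simpa using (measurable_const : Measurable fun _ : ProbabilityMeasure Y => (0 : ℝ≥0∞))
  · intro t ht
    have key : ∀ μ : ProbabilityMeasure Y,
        Filter.Tendsto (fun n => ∫⁻ x, ((ht : IsClosed t).apprSeq n x : ℝ≥0∞) ∂(μ : Measure Y))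
          Filter.atTop (nhds ((μ : Measure Y) t)) := fun μ =>
      HasOuterApproxClosed.tendsto_lintegral_apprSeq ht (μ : Measure Y)
    exact ENNReal.measurable_of_tendsto (fun n => (cont _).measurable)
      (tendsto_pi_nhds.mpr key)
  · intro t htm hmeas
    have : (fun μ : ProbabilityMeasure Y => (μ : Measure Y) tᶜ)
        = fun μ : ProbabilityMeasure Y => 1 - (μ : Measure Y) t := by
      funext μ
      rw [measure_compl htm (measure_ne_top _ _), measure_univ]
    rw [this]
    exact measurable_const.sub hmeas
  · intro f hdisj hfm hmeas
    have : (fun μ : ProbabilityMeasure Y => (μ : Measure Y) (⋃ i, f i))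
        = fun μ : ProbabilityMeasure Y => ∑' i, (μ : Measure Y) (f i) := by
      funext μ
      exact measure_iUnion hdisj hfm
    rw [this]
    exact Measurable.ennreal_tsum hmeas

/-- Proposition 3.2: a countable-density criterion for Borel measurability of
the constrained support function `(x,Q) ↦ sup_{y ∈ 𝔥(x)} y·E_Q[S(x,·)]`, which then equals
`sup_n φ(y_n,x,Q)` with `φ(y,x,Q) = y·E_Q[S(x,·)]` for `y ∈ 𝔥(x)` and `-∞` otherwise. -/
theorem stmt15 {X Y : Type*}
    [TopologicalSpace X] [PolishSpace X] [MeasurableSpace X] [BorelSpace X]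
    [TopologicalSpace Y] [PolishSpace Y] [MeasurableSpace Y] [BorelSpace Y]
    {d : ℕ} (S : X → Y → EuclideanSpace ℝ (Fin d))
    (hS : Measurable (Function.uncurry S))
    (𝔥 : X → Set (EuclideanSpace ℝ (Fin d)))
    (hgraph : MeasurableSet {p : X × EuclideanSpace ℝ (Fin d) | p.2 ∈ 𝔥 p.1})
    (yseq : ℕ → EuclideanSpace ℝ (Fin d))
    (hdense : ∀ x, ∀ y ∈ 𝔥 x, ∃ φ : ℕ → ℕ, StrictMono φ ∧ (∀ k, yseq (φ k) ∈ 𝔥 x) ∧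
      Filter.Tendsto (fun k => yseq (φ k)) Filter.atTop (nhds y)) :
    -- the support function equals the countable supremum on the integrability set
    (∀ p : X × ProbabilityMeasure Y, Integrable (fun y => ‖S p.1 y‖) (p.2 : Measure Y) →
      sSup {r : EReal | ∃ v ∈ 𝔥 p.1,
          r = ((⟪v, ∫ y, S p.1 y ∂(p.2 : Measure Y)⟫ : ℝ) : EReal)} =
        ⨆ n, (if yseq n ∈ 𝔥 p.1
          then ((⟪yseq n, ∫ y, S p.1 y ∂(p.2 : Measure Y)⟫ : ℝ) : EReal) else ⊥)) ∧
    -- and it is Borel measurable on that set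
    (∀ B : Set EReal, MeasurableSet B →
      MeasurableSet[@Prod.instMeasurableSpace X (ProbabilityMeasure Y) _
          (borel (ProbabilityMeasure Y))]
        {p : X × ProbabilityMeasure Y |
          Integrable (fun y => ‖S p.1 y‖) (p.2 : Measure Y) ∧
          sSup {r : EReal | ∃ v ∈ 𝔥 p.1,
            r = ((⟪v, ∫ y, S p.1 y ∂(p.2 : Measure Y)⟫ : ℝ) : EReal)} ∈ B}) := by
  have part1 : ∀ p : X × ProbabilityMeasure Y,
      sSup {r : EReal | ∃ v ∈ 𝔥 p.1,
          r = ((⟪v, ∫ y, S p.1 y ∂(p.2 : Measure Y)⟫ : ℝ) : EReal)} =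
        ⨆ n, (if yseq n ∈ 𝔥 p.1
          then ((⟪yseq n, ∫ y, S p.1 y ∂(p.2 : Measure Y)⟫ : ℝ) : EReal) else ⊥) := by
    intro p
    set I := ∫ y, S p.1 y ∂(p.2 : Measure Y) with hI
    apply le_antisymm
    · apply sSup_le
      rintro r ⟨v, hv, rfl⟩
      obtain ⟨φ, -, hmem, htend⟩ := hdense p.1 v hv
      have h1 : Filter.Tendsto (fun k => ((⟪yseq (φ k), I⟫ : ℝ) : EReal)) Filter.atTop
          (nhds ((⟪v, I⟫ : ℝ) : EReal)) := by
        apply (continuous_coe_real_ereal.tendsto _).comp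
        exact ((continuous_id.inner continuous_const).tendsto v).comp htend
      refine le_of_tendsto h1 (Filter.Eventually.of_forall fun k => ?_)
      refine le_trans (le_of_eq ?_) (le_iSup
        (fun n => (if yseq n ∈ 𝔥 p.1 then ((⟪yseq n, I⟫ : ℝ) : EReal) else ⊥)) (φ k))
      rw [if_pos (hmem k)]
    · refine iSup_le fun n => ?_
      by_cases h : yseq n ∈ 𝔥 p.1
      · rw [if_pos h]; exact le_sSup ⟨yseq n, h, rfl⟩
      · rw [if_neg h]; exact bot_le
  refine ⟨fun p _ => part1 p, ?_⟩
  letI : MeasurableSpace (ProbabilityMeasure Y) := borel (ProbabilityMeasure Y)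
  haveI : BorelSpace (ProbabilityMeasure Y) := ⟨rfl⟩
  intro B hB
  have hcoe : Measurable fun p : X × ProbabilityMeasure Y => (p.2 : Measure Y) :=
    aux_toMeasure_measurable.comp measurable_snd
  let κ : ProbabilityTheory.Kernel (X × ProbabilityMeasure Y) Y :=
    ⟨fun p => (p.2 : Measure Y), hcoe⟩
  haveI : ProbabilityTheory.IsMarkovKernel κ := ⟨fun p => p.2.prop⟩
  have hSjoint : Measurable fun q : (X × ProbabilityMeasure Y) × Y => S q.1.1 q.2 :=
    hS.comp ((measurable_fst.comp measurable_fst).prodMk measurable_snd)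
  have hSm : ∀ x : X, Measurable (S x) := fun x => hS.comp measurable_prodMk_left
  have hL : Measurable fun p : X × ProbabilityMeasure Y =>
      ∫⁻ y, (‖S p.1 y‖₊ : ℝ≥0∞) ∂(κ p) := by
    apply Measurable.lintegral_kernel_prod_right
    exact hSjoint.nnnorm.coe_nnreal_ennreal
  have hInt : ∀ p : X × ProbabilityMeasure Y,
      Integrable (fun y => ‖S p.1 y‖) (p.2 : Measure Y) ↔
        (∫⁻ y, (‖S p.1 y‖₊ : ℝ≥0∞) ∂(κ p)) ≠ ⊤ := by
    intro p
    constructor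
    · intro h
      have h2 := h.hasFiniteIntegral
      simp only [HasFiniteIntegral, nnnorm_norm, enorm_norm, enorm_eq_nnnorm] at h2
      exact h2.ne
    · intro h
      refine ⟨(hSm p.1).norm.aestronglyMeasurable, ?_⟩
      simp only [HasFiniteIntegral, nnnorm_norm, enorm_norm, enorm_eq_nnnorm]
      exact lt_top_iff_ne_top.mpr h
  have hIntSet : MeasurableSet
      {p : X × ProbabilityMeasure Y | Integrable (fun y => ‖S p.1 y‖) (p.2 : Measure Y)} := by
    have : {p : X × ProbabilityMeasure Y | Integrable (fun y => ‖S p.1 y‖) (p.2 : Measure Y)}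
        = {p : X × ProbabilityMeasure Y | (∫⁻ y, (‖S p.1 y‖₊ : ℝ≥0∞) ∂(κ p)) ≠ ⊤} :=
      Set.ext fun p => hInt p
    rw [this]
    exact (hL (measurableSet_singleton ⊤)).compl
  have hIsm : Measurable fun p : X × ProbabilityMeasure Y =>
      ∫ y, S p.1 y ∂(p.2 : Measure Y) := by
    have : StronglyMeasurable fun p : X × ProbabilityMeasure Y => ∫ y, S p.1 y ∂(κ p) :=
      MeasureTheory.StronglyMeasurable.integral_kernel_prod_right
        (f := fun (p : X × ProbabilityMeasure Y) y => S p.1 y) (κ := κ)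
        hSjoint.stronglyMeasurable
    exact this.measurable
  have hG : Measurable fun p : X × ProbabilityMeasure Y =>
      ⨆ n, (if yseq n ∈ 𝔥 p.1
        then ((⟪yseq n, ∫ y, S p.1 y ∂(p.2 : Measure Y)⟫ : ℝ) : EReal) else ⊥) := by
    apply Measurable.iSup
    intro n
    have hcond : MeasurableSet {p : X × ProbabilityMeasure Y | yseq n ∈ 𝔥 p.1} :=
      hgraph.preimage (measurable_fst.prodMk measurable_const)
    exact Measurable.ite hcond
      (measurable_coe_real_ereal.comp (measurable_const.inner hIsm)) measurable_const
  have hEq : {p : X × ProbabilityMeasure Y |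
        Integrable (fun y => ‖S p.1 y‖) (p.2 : Measure Y) ∧
        sSup {r : EReal | ∃ v ∈ 𝔥 p.1,
          r = ((⟪v, ∫ y, S p.1 y ∂(p.2 : Measure Y)⟫ : ℝ) : EReal)} ∈ B}
      = {p : X × ProbabilityMeasure Y | Integrable (fun y => ‖S p.1 y‖) (p.2 : Measure Y)}
        ∩ (fun p : X × ProbabilityMeasure Y =>
            ⨆ n, (if yseq n ∈ 𝔥 p.1
              then ((⟪yseq n, ∫ y, S p.1 y ∂(p.2 : Measure Y)⟫ : ℝ) : EReal) else ⊥)) ⁻¹' B := by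
    ext p
    simp only [Set.mem_setOf_eq, Set.mem_inter_iff, Set.mem_preimage]
    exact and_congr_right fun _ => by rw [part1 p]
  rw [hEq]
  exact hIntSet.inter (hG hB)
end
end
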